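/- arXiv:2007.09024 — 8 statements merged into one kernel-verified Lean document; each statement's English description precedes it below -/
import Mathlib

section
/- Let $\mathscr{T}$ be a $p$th order ($p\ge 3$) odeco tensor of dimension $d\times\cdots\times d$ whose essential singular values are all equal to $\lambda\ge 0$. Then $\min_{x^{(1)}\in S^{d-1}}\max_{x^{(2)},\ldots,x^{(p)}\in S^{d-1}}\langle \mathscr{T}, x^{(1)}\otimes\cdots\otimes x^{(p)}\rangle = \lambda/\sqrt{d}$. -/
open Finset Real

/-- Inner product of a `p`-th order tensor with a rank-one tensor `x 0 ⊗ ⋯ ⊗ x (p-1)`. -/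
noncomputable def tInner {p d : ℕ} (T : (Fin p → Fin d) → ℝ) (x : Fin p → Fin d → ℝ) : ℝ :=
  ∑ i : Fin p → Fin d, T i * ∏ q, x q (i q)

/-- Membership in the unit sphere `S^{d-1}`. -/
def UnitVec {d : ℕ} (x : Fin d → ℝ) : Prop := ∑ j, x j ^ 2 = 1

lemma colsOrtho {d : ℕ} (u : Fin d → Fin d → ℝ)
    (hu : ∀ k l, (∑ j, u k j * u l j) = if k = l then 1 else 0) :
    ∀ j j', (∑ k, u k j * u k j') = if j = j' then 1 else 0 := by
  intro j j'
  set M : Matrix (Fin d) (Fin d) ℝ := Matrix.of u with hM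
  have h1 : M * M.transpose = 1 := by
    ext k l
    simpa [Matrix.mul_apply, Matrix.transpose_apply, hM, Matrix.one_apply] using hu k l
  have h2 : M.transpose * M = 1 := mul_eq_one_comm.mp h1
  have h3 := congrFun (congrFun h2 j) j'
  simpa [Matrix.mul_apply, Matrix.transpose_apply, hM, Matrix.one_apply] using h3

lemma parseval {d : ℕ} (u : Fin d → Fin d → ℝ)
    (hu : ∀ k l, (∑ j, u k j * u l j) = if k = l then 1 else 0)
    (x : Fin d → ℝ) (hx : ∑ j, x j ^ 2 = 1) :
    ∑ k, (∑ j, u k j * x j) ^ 2 = 1 := by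
  have hc := colsOrtho u hu
  calc ∑ k, (∑ j, u k j * x j)^2
      = ∑ k, ∑ j, ∑ j', (x j * x j') * (u k j * u k j') := by
        refine Finset.sum_congr rfl fun k _ => ?_
        rw [sq, Finset.sum_mul_sum]
        exact Finset.sum_congr rfl fun j _ => Finset.sum_congr rfl fun j' _ => by ring
    _ = ∑ j, ∑ j', (x j * x j') * ∑ k, u k j * u k j' := by
        rw [Finset.sum_comm]
        refine Finset.sum_congr rfl fun j _ => ?_
        rw [Finset.sum_comm]
        exact Finset.sum_congr rfl fun j' _ => (Finset.mul_sum _ _ _).symm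
    _ = 1 := by
        simp only [hc, mul_ite, mul_one, mul_zero, Finset.sum_ite_eq, Finset.mem_univ, if_true]
        rw [← hx]; exact Finset.sum_congr rfl fun j _ => (sq (x j)).symm

lemma synth_coeff {d : ℕ} (u : Fin d → Fin d → ℝ)
    (hu : ∀ k l, (∑ j, u k j * u l j) = if k = l then 1 else 0)
    (c : Fin d → ℝ) (k : Fin d) :
    (∑ j, u k j * ∑ l, c l * u l j) = c k := by
  calc (∑ j, u k j * ∑ l, c l * u l j)
      = ∑ l, c l * ∑ j, u k j * u l j := by
        simp only [Finset.mul_sum]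
        rw [Finset.sum_comm]
        exact Finset.sum_congr rfl fun l _ => Finset.sum_congr rfl fun j _ => by ring
    _ = c k := by simp [hu]

lemma synth_unit {d : ℕ} (u : Fin d → Fin d → ℝ)
    (hu : ∀ k l, (∑ j, u k j * u l j) = if k = l then 1 else 0)
    (c : Fin d → ℝ) :
    (∑ j, (∑ l, c l * u l j) ^ 2) = ∑ k, c k ^ 2 := by
  calc (∑ j, (∑ l, c l * u l j) ^ 2)
      = ∑ j, ∑ k, ∑ l, (c k * c l) * (u k j * u l j) := by
        refine Finset.sum_congr rfl fun j _ => ?_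
        rw [sq, Finset.sum_mul_sum]
        exact Finset.sum_congr rfl fun k _ => Finset.sum_congr rfl fun l _ => by ring
    _ = ∑ k, ∑ l, (c k * c l) * ∑ j, u k j * u l j := by
        rw [Finset.sum_comm]
        refine Finset.sum_congr rfl fun k _ => ?_
        rw [Finset.sum_comm]
        exact Finset.sum_congr rfl fun l _ => (Finset.mul_sum _ _ _).symm
    _ = ∑ k, c k ^ 2 := by
        simp only [hu, mul_ite, mul_one, mul_zero, Finset.sum_ite_eq, Finset.mem_univ, if_true]
        exact Finset.sum_congr rfl fun k _ => (sq (c k)).symm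

lemma tInner_eq {p d : ℕ} (lam : ℝ) (u : Fin p → Fin d → Fin d → ℝ)
    (T : (Fin p → Fin d) → ℝ)
    (hT : ∀ i, T i = ∑ k, lam * ∏ q, u q k (i q))
    (x : Fin p → Fin d → ℝ) :
    tInner T x = lam * ∑ k, ∏ q, (∑ j, u q k j * x q j) := by
  unfold tInner
  calc ∑ i : Fin p → Fin d, T i * ∏ q, x q (i q)
      = ∑ i : Fin p → Fin d, ∑ k, lam * ∏ q, (u q k (i q) * x q (i q)) := by
        refine Finset.sum_congr rfl fun i _ => ?_
        rw [hT i, Finset.sum_mul]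
        refine Finset.sum_congr rfl fun k _ => ?_
        rw [Finset.prod_mul_distrib, mul_assoc]
    _ = ∑ k, lam * ∑ i : Fin p → Fin d, ∏ q, (u q k (i q) * x q (i q)) := by
        rw [Finset.sum_comm]
        exact Finset.sum_congr rfl fun k _ => (Finset.mul_sum _ _ _).symm
    _ = lam * ∑ k, ∏ q, (∑ j, u q k j * x q j) := by
        rw [Finset.mul_sum]
        refine Finset.sum_congr rfl fun k _ => ?_
        congr 1
        rw [Finset.prod_univ_sum]
        simp

lemma key {p d : ℕ} (hp : 3 ≤ p) (hd : 0 < d) (lam : ℝ) (hlam : 0 ≤ lam)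
    (u : Fin p → Fin d → Fin d → ℝ)
    (hu : ∀ q k l, (∑ j, u q k j * u q l j) = if k = l then 1 else 0)
    (T : (Fin p → Fin d) → ℝ)
    (hT : ∀ i, T i = ∑ k, lam * ∏ q, u q k (i q))
    (h0 : (0:ℕ) < p) (x1 : Fin d → ℝ) (hx1 : UnitVec x1) :
    sSup { v | ∃ x : Fin p → Fin d → ℝ, (∀ q, UnitVec (x q)) ∧
        x ⟨0, h0⟩ = x1 ∧ v = tInner T x }
      = lam * Finset.univ.sup' ⟨⟨0, hd⟩, Finset.mem_univ _⟩
          (fun k => |∑ j, u ⟨0, h0⟩ k j * x1 j|) := by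
  set q0 : Fin p := ⟨0, h0⟩ with hq0def
  set q1 : Fin p := ⟨1, by omega⟩ with hq1def
  set q2 : Fin p := ⟨2, by omega⟩ with hq2def
  have hq01 : q1 ≠ q0 := by simp [hq0def, hq1def, Fin.ext_iff]
  have hq02 : q2 ≠ q0 := by simp [hq0def, hq2def, Fin.ext_iff]
  have hq12 : q2 ≠ q1 := by simp [hq1def, hq2def, Fin.ext_iff]
  set c1 : Fin d → ℝ := fun k => ∑ j, u q0 k j * x1 j with hc1def
  have hne : (Finset.univ : Finset (Fin d)).Nonempty := ⟨⟨0, hd⟩, Finset.mem_univ _⟩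
  set M : ℝ := Finset.univ.sup' ⟨⟨0, hd⟩, Finset.mem_univ _⟩ (fun k => |c1 k|) with hMdef
  have hc1u : ∑ k, c1 k ^ 2 = 1 := parseval (u q0) (hu q0) x1 hx1
  have hleM : ∀ k, |c1 k| ≤ M := fun k => Finset.le_sup' (fun k => |c1 k|) (Finset.mem_univ k)
  have hM0 : 0 ≤ M := le_trans (abs_nonneg (c1 ⟨0, hd⟩)) (hleM _)
  -- membership characterization
  have hmem : ∀ v, (∃ x : Fin p → Fin d → ℝ, (∀ q, UnitVec (x q)) ∧ x ⟨0, h0⟩ = x1 ∧ v = tInner T x)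
      ↔ ∃ c : Fin p → Fin d → ℝ, (∀ q, ∑ k, c q k ^ 2 = 1) ∧ c q0 = c1 ∧
        v = lam * ∑ k, ∏ q, c q k := by
    intro v
    constructor
    · rintro ⟨x, hxu, hx0, rfl⟩
      refine ⟨fun q k => ∑ j, u q k j * x q j,
        fun q => parseval (u q) (hu q) (x q) (hxu q), ?_, tInner_eq lam u T hT x⟩
      funext k
      rw [hc1def]
      show (∑ j, u q0 k j * x q0 j) = ∑ j, u q0 k j * x1 j
      rw [hx0]
    · rintro ⟨c, hcu, hcq0, rfl⟩
      classical
      refine ⟨Function.update (fun q j => ∑ l, c q l * u q l j) q0 x1, ?_, ?_, ?_⟩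
      · intro q
        by_cases h : q = q0
        · subst h; rw [Function.update_self]; exact hx1
        · rw [Function.update_of_ne h]
          show (∑ j, (∑ l, c q l * u q l j) ^ 2) = 1
          rw [synth_unit (u q) (hu q) (c q)]
          exact hcu q
      · show Function.update (fun q j => ∑ l, c q l * u q l j) q0 x1 q0 = x1
        exact Function.update_self _ _ _
      · rw [tInner_eq lam u T hT]
        congr 1
        refine Finset.sum_congr rfl fun k _ => Finset.prod_congr rfl fun q _ => ?_
        by_cases h : q = q0
        · subst h
          rw [Function.update_self, hcq0]
        · rw [Function.update_of_ne h]
          exact (synth_coeff (u q) (hu q) (c q) k).symm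
  -- upper bound core
  have hcore : ∀ c : Fin p → Fin d → ℝ, (∀ q, ∑ k, c q k ^ 2 = 1) → c q0 = c1 →
      (∑ k, ∏ q, c q k) ≤ M := by
    intro c hcu hcq0
    have habs1 : ∀ q k, |c q k| ≤ 1 := by
      intro q k
      have h1 : c q k ^ 2 ≤ 1 := by
        rw [← hcu q]
        exact Finset.single_le_sum (f := fun l => c q l ^ 2) (fun l _ => sq_nonneg _)
          (Finset.mem_univ k)
      nlinarith [abs_nonneg (c q k), sq_abs (c q k)]
    have hsub : ({q1, q2} : Finset (Fin p)) ⊆ Finset.univ.erase q0 := by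
      intro q hq
      simp only [Finset.mem_insert, Finset.mem_singleton] at hq
      rcases hq with rfl | rfl
      · exact Finset.mem_erase.mpr ⟨hq01, Finset.mem_univ _⟩
      · exact Finset.mem_erase.mpr ⟨hq02, Finset.mem_univ _⟩
    have hr : ∀ k, |∏ q ∈ Finset.univ.erase q0, c q k| ≤ |c q1 k| * |c q2 k| := by
      intro k
      rw [Finset.abs_prod]
      calc ∏ q ∈ Finset.univ.erase q0, |c q k|
          = (∏ q ∈ (Finset.univ.erase q0) \ {q1, q2}, |c q k|) *
              ∏ q ∈ ({q1, q2} : Finset (Fin p)), |c q k| := (Finset.prod_sdiff hsub).symm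
        _ ≤ 1 * ∏ q ∈ ({q1, q2} : Finset (Fin p)), |c q k| := by
            refine mul_le_mul_of_nonneg_right ?_ (Finset.prod_nonneg fun q _ => abs_nonneg _)
            exact Finset.prod_le_one (fun q _ => abs_nonneg _) (fun q _ => habs1 q k)
        _ = |c q1 k| * |c q2 k| := by rw [one_mul, Finset.prod_pair (Ne.symm hq12)]
    have hCS : (∑ k, |c q1 k| * |c q2 k|) ≤ 1 := by
      have h2 := Finset.sum_mul_sq_le_sq_mul_sq Finset.univ (fun k => |c q1 k|) (fun k => |c q2 k|)
      simp only [sq_abs] at h2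
      rw [hcu q1, hcu q2, mul_one] at h2
      have h3 : (0:ℝ) ≤ ∑ k, |c q1 k| * |c q2 k| :=
        Finset.sum_nonneg fun k _ => mul_nonneg (abs_nonneg _) (abs_nonneg _)
      nlinarith
    calc ∑ k, ∏ q, c q k
        = ∑ k, c1 k * ∏ q ∈ Finset.univ.erase q0, c q k := by
          refine Finset.sum_congr rfl fun k _ => ?_
          rw [← hcq0]
          exact (Finset.mul_prod_erase _ _ (Finset.mem_univ q0)).symm
      _ ≤ ∑ k, M * (|c q1 k| * |c q2 k|) := by
          refine Finset.sum_le_sum fun k _ => ?_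
          calc c1 k * ∏ q ∈ Finset.univ.erase q0, c q k
              ≤ |c1 k * ∏ q ∈ Finset.univ.erase q0, c q k| := le_abs_self _
            _ = |c1 k| * |∏ q ∈ Finset.univ.erase q0, c q k| := abs_mul _ _
            _ ≤ M * (|c q1 k| * |c q2 k|) :=
                mul_le_mul (hleM k) (hr k) (abs_nonneg _) hM0
      _ = M * ∑ k, |c q1 k| * |c q2 k| := (Finset.mul_sum _ _ _).symm
      _ ≤ M * 1 := mul_le_mul_of_nonneg_left hCS hM0
      _ = M := mul_one M
  -- attainment
  obtain ⟨k0, -, hk0⟩ := Finset.exists_mem_eq_sup' hne (fun k => |c1 k|)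
  have hMk0 : M = |c1 k0| := hk0
  set sgn : ℝ := if c1 k0 < 0 then -1 else 1 with hsgndef
  set ca : Fin p → Fin d → ℝ := fun q k =>
    if q = q0 then c1 k else if q = q1 then (if k = k0 then sgn else 0)
      else (if k = k0 then 1 else 0) with hcadef
  have hsgn : sgn ^ 2 = 1 := by
    by_cases h : c1 k0 < 0 <;> simp [hsgndef, h]
  have hcau : ∀ q, ∑ k, ca q k ^ 2 = 1 := by
    intro q
    by_cases h : q = q0
    · simpa [hcadef, h] using hc1u
    · by_cases h1 : q = q1
      · subst h1
        rw [Finset.sum_eq_single k0]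
        · simp [hcadef, hq01, hsgn]
        · intro k _ hk; simp [hcadef, hq01, hk]
        · intro hk; exact absurd (Finset.mem_univ k0) hk
      · rw [Finset.sum_eq_single k0]
        · simp [hcadef, h, h1]
        · intro k _ hk; simp [hcadef, h, h1, hk]
        · intro hk; exact absurd (Finset.mem_univ k0) hk
  have hprod : ∑ k, ∏ q, ca q k = M := by
    rw [Finset.sum_eq_single k0]
    · rw [← Finset.mul_prod_erase _ _ (Finset.mem_univ q0),
        ← Finset.mul_prod_erase _ _ (Finset.mem_erase.mpr ⟨hq01, Finset.mem_univ q1⟩),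
        Finset.prod_eq_one]
      · have e0 : ca q0 k0 = c1 k0 := by simp [hcadef]
        have e1 : ca q1 k0 = sgn := by simp [hcadef, hq01]
        rw [e0, e1, hMk0]
        by_cases h : c1 k0 < 0
        · rw [abs_of_neg h]; simp [hsgndef, h]
        · rw [abs_of_nonneg (not_lt.mp h)]; simp [hsgndef, h]
      · intro q hq
        obtain ⟨hq1, hq0'⟩ : q ≠ q1 ∧ q ≠ q0 := by
          have h1 := Finset.mem_erase.mp hq
          have h2 := Finset.mem_erase.mp h1.2
          exact ⟨h1.1, h2.1⟩
        simp [hcadef, hq0', hq1]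
    · intro k _ hk
      refine Finset.prod_eq_zero (Finset.mem_univ q2) ?_
      simp [hcadef, hq02, hq12, hk]
    · intro hk; exact absurd (Finset.mem_univ k0) hk
  have hmemM : (lam * M) ∈ { v | ∃ x : Fin p → Fin d → ℝ, (∀ q, UnitVec (x q)) ∧
      x ⟨0, h0⟩ = x1 ∧ v = tInner T x } := by
    refine (hmem _).mpr ⟨ca, hcau, ?_, by rw [hprod]⟩
    funext k; simp [hcadef]
  have hubS : ∀ v ∈ { v | ∃ x : Fin p → Fin d → ℝ, (∀ q, UnitVec (x q)) ∧
      x ⟨0, h0⟩ = x1 ∧ v = tInner T x }, v ≤ lam * M := by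
    intro v hv
    obtain ⟨c, hcu, hcq0, rfl⟩ := (hmem v).mp hv
    exact mul_le_mul_of_nonneg_left (hcore c hcu hcq0) hlam
  exact le_antisymm (csSup_le ⟨_, hmemM⟩ hubS) (le_csSup ⟨_, hubS⟩ hmemM)

/-- For a `p`-th order (`p ≥ 3`) odeco tensor of dimension `d × ⋯ × d` whose essential
singular values are all equal to `λ ≥ 0`,
`min_{x⁽¹⁾ ∈ S^{d-1}} max_{x⁽²⁾,…,x⁽ᵖ⁾ ∈ S^{d-1}} ⟨T, x⁽¹⁾ ⊗ ⋯ ⊗ x⁽ᵖ⁾⟩ = λ/√d`. -/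
theorem stmt0 (p d : ℕ) (hp : 3 ≤ p) (hd : 0 < d) (lam : ℝ) (hlam : 0 ≤ lam)
    (u : Fin p → Fin d → Fin d → ℝ)
    (hu : ∀ q k l, (∑ j, u q k j * u q l j) = if k = l then 1 else 0)
    (T : (Fin p → Fin d) → ℝ)
    (hT : ∀ i, T i = ∑ k, lam * ∏ q, u q k (i q)) :
    sInf { m | ∃ x1 : Fin d → ℝ, UnitVec x1 ∧
      m = sSup { v | ∃ x : Fin p → Fin d → ℝ, (∀ q, UnitVec (x q)) ∧
          x ⟨0, by omega⟩ = x1 ∧ v = tInner T x } } = lam / Real.sqrt d := by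
  have h0 : (0:ℕ) < p := by omega
  have hdR : (0:ℝ) < (d:ℝ) := by exact_mod_cast hd
  have hsd : 0 < Real.sqrt d := Real.sqrt_pos.mpr hdR
  have hsd2 : Real.sqrt d ^ 2 = (d:ℝ) := Real.sq_sqrt hdR.le
  -- lower bound for all members
  have hlb : ∀ m ∈ { m | ∃ x1 : Fin d → ℝ, UnitVec x1 ∧
      m = sSup { v | ∃ x : Fin p → Fin d → ℝ, (∀ q, UnitVec (x q)) ∧
          x ⟨0, by omega⟩ = x1 ∧ v = tInner T x } }, lam / Real.sqrt d ≤ m := by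
    rintro m ⟨x1, hx1, rfl⟩
    rw [key hp hd lam hlam u hu T hT h0 x1 hx1]
    set c1 : Fin d → ℝ := fun k => ∑ j, u ⟨0, h0⟩ k j * x1 j with hc1def
    set M : ℝ := Finset.univ.sup' ⟨⟨0, hd⟩, Finset.mem_univ _⟩ (fun k => |c1 k|) with hMdef
    have hc1u : ∑ k, c1 k ^ 2 = 1 := parseval (u ⟨0, h0⟩) (hu _) x1 hx1
    have hleM : ∀ k, |c1 k| ≤ M := fun k => Finset.le_sup' (fun k => |c1 k|) (Finset.mem_univ k)
    have hM0 : 0 ≤ M := le_trans (abs_nonneg (c1 ⟨0, hd⟩)) (hleM _)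
    have hMd : 1 ≤ (d:ℝ) * M ^ 2 := by
      have h1 : ∑ k, c1 k ^ 2 ≤ ∑ _k : Fin d, M ^ 2 := by
        refine Finset.sum_le_sum fun k _ => ?_
        have := hleM k
        nlinarith [abs_nonneg (c1 k), sq_abs (c1 k)]
      rw [hc1u] at h1
      simpa [Finset.sum_const, Finset.card_univ, nsmul_eq_mul] using h1
    rw [div_le_iff₀ hsd]
    have h1M : 1 ≤ M * Real.sqrt d := by
      have e : (M * Real.sqrt d) ^ 2 = M ^ 2 * d := by rw [mul_pow, hsd2]
      nlinarith [mul_nonneg hM0 hsd.le]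
    calc lam = lam * 1 := (mul_one lam).symm
      _ ≤ lam * (M * Real.sqrt d) := mul_le_mul_of_nonneg_left h1M hlam
      _ = lam * M * Real.sqrt d := by ring
  -- membership of lam / sqrt d
  have hmem : (lam / Real.sqrt d) ∈ { m | ∃ x1 : Fin d → ℝ, UnitVec x1 ∧
      m = sSup { v | ∃ x : Fin p → Fin d → ℝ, (∀ q, UnitVec (x q)) ∧
          x ⟨0, by omega⟩ = x1 ∧ v = tInner T x } } := by
    refine ⟨fun j => ∑ k, (Real.sqrt d)⁻¹ * u ⟨0, h0⟩ k j, ?_, ?_⟩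
    · show (∑ j, (∑ k, (Real.sqrt d)⁻¹ * u ⟨0, h0⟩ k j) ^ 2) = 1
      rw [synth_unit (u ⟨0, h0⟩) (hu _)]
      rw [Finset.sum_const, Finset.card_univ, Fintype.card_fin, nsmul_eq_mul]
      rw [inv_pow, hsd2]
      field_simp
    · rw [key hp hd lam hlam u hu T hT h0 _ ?_]
      · have hf : (fun k => |∑ j, u ⟨0, h0⟩ k j *
            ((fun j => ∑ k, (Real.sqrt d)⁻¹ * u ⟨0, h0⟩ k j) j)|) =
            fun _k : Fin d => (Real.sqrt d)⁻¹ := by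
          funext k
          rw [show (∑ j, u ⟨0, h0⟩ k j * ∑ l, (Real.sqrt d)⁻¹ * u ⟨0, h0⟩ l j)
              = (Real.sqrt d)⁻¹ from synth_coeff (u ⟨0, h0⟩) (hu _) _ k]
          exact abs_of_nonneg (by positivity)
        rw [hf, div_eq_mul_inv]; congr 1; exact (Finset.sup'_const ..).symm
      · show (∑ j, (∑ k, (Real.sqrt d)⁻¹ * u ⟨0, h0⟩ k j) ^ 2) = 1
        rw [synth_unit (u ⟨0, h0⟩) (hu _)]
        rw [Finset.sum_const, Finset.card_univ, Fintype.card_fin, nsmul_eq_mul]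
        rw [inv_pow, hsd2]
        field_simp
  exact le_antisymm (csInf_le ⟨lam / Real.sqrt d, fun m hm => hlb m hm⟩ hmem)
    (le_csInf ⟨_, hmem⟩ hlb)
end

section
/- For the third-order tensors $\mathscr{T}=2\,e_1\otimes e_1\otimes e_1$ and $\tilde{\mathscr{T}}=(e_1+e_2)^{\otimes 3}+(e_1-e_2)^{\otimes 3}$ in $\mathbb{R}^{2\times 2\times 2}$, the difference satisfies $\tilde{\mathscr{T}}-\mathscr{T}=2(e_2\otimes e_2\otimes e_1+e_2\otimes e_1\otimes e_2+e_1\otimes e_2\otimes e_2)$, and the singular values of $\tilde{\mathscr{T}}$ in its orthogonal decomposition $\tilde{\mathscr{T}}=2\sqrt{2}\,v_+^{\otimes 3}+2\sqrt{2}\,v_-^{\otimes 3}$ with $v_\pm=(e_1\pm e_2)/\sqrt{2}$ are both $2\sqrt{2}$, so that $\max\{|\lambda_1-\tilde\lambda_1|,|\lambda_2-\tilde\lambda_2|\}=2\sqrt{2}$ where $(\lambda_1,\lambda_2)=(2,0)$. -/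
open Finset Real

/-- Third-order tensor product of three vectors in `ℝ²`. -/
def otimes3 (u v w : Fin 2 → ℝ) : Fin 2 → Fin 2 → Fin 2 → ℝ :=
  fun i j k => u i * v j * w k

/-- Standard basis vectors of `ℝ²`. -/
def e (i : Fin 2) : Fin 2 → ℝ := fun j => if j = i then 1 else 0

/-- For `T = 2 e₁⊗e₁⊗e₁` and `T̃ = (e₁+e₂)^{⊗3} + (e₁-e₂)^{⊗3}`:
the difference is `2(e₂⊗e₂⊗e₁ + e₂⊗e₁⊗e₂ + e₁⊗e₂⊗e₂)`, `T̃` has the odeco decomposition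
`2√2 v₊^{⊗3} + 2√2 v₋^{⊗3}` with `v± = (e₁ ± e₂)/√2`, and
`max{|λ₁-λ̃₁|, |λ₂-λ̃₂|} = 2√2` with `(λ₁,λ₂) = (2,0)` and `(λ̃₁,λ̃₂) = (2√2,2√2)`. -/
theorem stmt2
    (T Tt : Fin 2 → Fin 2 → Fin 2 → ℝ)
    (hT : ∀ i j k, T i j k = 2 * otimes3 (e 0) (e 0) (e 0) i j k)
    (hTt : ∀ i j k, Tt i j k =
      otimes3 (fun m => e 0 m + e 1 m) (fun m => e 0 m + e 1 m) (fun m => e 0 m + e 1 m) i j k +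
      otimes3 (fun m => e 0 m - e 1 m) (fun m => e 0 m - e 1 m) (fun m => e 0 m - e 1 m) i j k) :
    (∀ i j k, Tt i j k - T i j k =
      2 * (otimes3 (e 1) (e 1) (e 0) i j k + otimes3 (e 1) (e 0) (e 1) i j k +
           otimes3 (e 0) (e 1) (e 1) i j k)) ∧
    (∀ i j k, Tt i j k =
      2 * Real.sqrt 2 * otimes3 (fun m => (e 0 m + e 1 m) / Real.sqrt 2)
          (fun m => (e 0 m + e 1 m) / Real.sqrt 2) (fun m => (e 0 m + e 1 m) / Real.sqrt 2) i j k +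
      2 * Real.sqrt 2 * otimes3 (fun m => (e 0 m - e 1 m) / Real.sqrt 2)
          (fun m => (e 0 m - e 1 m) / Real.sqrt 2) (fun m => (e 0 m - e 1 m) / Real.sqrt 2) i j k) ∧
    max |(2 : ℝ) - 2 * Real.sqrt 2| |(0 : ℝ) - 2 * Real.sqrt 2| = 2 * Real.sqrt 2 := by

  have h2 : Real.sqrt 2 > 0 := Real.sqrt_pos.mpr (by norm_num)
  have hs : Real.sqrt 2 * Real.sqrt 2 = 2 := Real.mul_self_sqrt (by norm_num)
  refine ⟨?_, ?_, ?_⟩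
  · intro i j k
    rw [hT, hTt]
    fin_cases i <;> fin_cases j <;> fin_cases k <;>
      norm_num [otimes3, e]
  · intro i j k
    rw [hTt]
    have key : ∀ a b c : ℝ, 2 * Real.sqrt 2 * (a / Real.sqrt 2 * (b / Real.sqrt 2) * (c / Real.sqrt 2)) = a * b * c := by
      intro a b c
      field_simp
      rw [Real.sq_sqrt (by norm_num)]
    simp only [otimes3]
    rw [key, key]
  · have h1 : Real.sqrt 2 ≥ 1 := by
      nlinarith [hs]
    rw [abs_of_nonpos (by nlinarith), abs_of_nonpos (by nlinarith)]
    have : -(2 - 2 * Real.sqrt 2) ≤ 2 * Real.sqrt 2 := by nlinarith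
    rw [max_eq_right (by nlinarith)]
    ring
end

section
/- Let $d\ge 2$, $\lambda>0$, and $v=\frac{1}{\sqrt{d-1}}e_d-\frac{1}{d-1}(e_1+\cdots+e_{d-1})\in\mathbb{R}^d$. For the third-order tensor $\mathscr{E}=\lambda\sum_{i=1}^{d-1} v\otimes e_i\otimes e_i$, the tensor spectral norm satisfies $\|\mathscr{E}\|=\lambda\|v\|$, while the mode-1 matricization satisfies $\|\mathrm{Mat}_1(\mathscr{E})\|\ge \sqrt{d-1}\,\lambda\|v\|$. In particular $\|\mathrm{Mat}_1(\mathscr{E})\|\ge\sqrt{d-1}\,\|\mathscr{E}\|$. -/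
open Finset Real

/-- Spectral norm of a third-order tensor. -/
noncomputable def specNorm3 {d : ℕ} (E : Fin d → Fin d → Fin d → ℝ) : ℝ :=
  sSup { s | ∃ a b c : Fin d → ℝ, UnitVec a ∧ UnitVec b ∧ UnitVec c ∧
    s = ∑ i, ∑ j, ∑ k, E i j k * a i * b j * c k }

/-- Operator norm of the mode-1 matricization of a third-order tensor,
viewed as a `d × d²` matrix via a bilinear-form supremum. -/
noncomputable def mat1Norm {d : ℕ} (E : Fin d → Fin d → Fin d → ℝ) : ℝ :=
  sSup { s | ∃ (x : Fin d → ℝ) (y : Fin d × Fin d → ℝ),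
    UnitVec x ∧ (∑ jk, y jk ^ 2 = 1) ∧
    s = ∑ i, ∑ jk : Fin d × Fin d, E i jk.1 jk.2 * x i * y jk }

/-- Cauchy-Schwarz with square roots. -/
lemma cs_sqrt {ι : Type*} (s : Finset ι) (f g : ι → ℝ) :
    |∑ j ∈ s, f j * g j| ≤ Real.sqrt (∑ j ∈ s, f j ^ 2) * Real.sqrt (∑ j ∈ s, g j ^ 2) := by
  rw [← Real.sqrt_sq_eq_abs, ← Real.sqrt_mul (by positivity)]
  exact Real.sqrt_le_sqrt (Finset.sum_mul_sq_le_sq_mul_sq s f g)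

/-- For `E = λ ∑_{i=1}^{d-1} v ⊗ e_i ⊗ e_i` with
`v = e_d/√(d-1) - (e_1 + ⋯ + e_{d-1})/(d-1)`, the tensor spectral norm is `λ‖v‖`, while the
mode-1 matricization has operator norm at least `√(d-1) λ‖v‖ = √(d-1) ‖E‖`. -/
theorem stmt3 (d : ℕ) (hd : 2 ≤ d) (lam : ℝ) (hlam : 0 < lam)
    (v : Fin d → ℝ)
    (hv : ∀ i : Fin d, v i = if (i : ℕ) = d - 1 then 1 / Real.sqrt (d - 1)
      else -(1 / (d - 1)))
    (E : Fin d → Fin d → Fin d → ℝ)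
    (hE : ∀ i j k, E i j k = lam * v i * (if j = k ∧ (j : ℕ) < d - 1 then 1 else 0)) :
    specNorm3 E = lam * Real.sqrt (∑ i, v i ^ 2) ∧
    Real.sqrt (d - 1) * (lam * Real.sqrt (∑ i, v i ^ 2)) ≤ mat1Norm E ∧
    Real.sqrt (d - 1) * specNorm3 E ≤ mat1Norm E := by
  have hd1 : (1:ℝ) ≤ (d:ℝ) - 1 := by
    have : (2:ℝ) ≤ (d:ℝ) := by exact_mod_cast hd
    linarith
  have hdpos : (0:ℝ) < (d:ℝ) - 1 := by linarith
  set c1 : ℝ := Real.sqrt ((d:ℝ) - 1) with hc1def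
  have hc1 : 0 < c1 := Real.sqrt_pos.2 hdpos
  have hc1sq : c1 ^ 2 = (d:ℝ) - 1 := Real.sq_sqrt hdpos.le
  -- positivity of ∑ v², N := √(∑ v²)
  have i0 : Fin d := ⟨d - 1, by omega⟩
  have hsum_pos : 0 < ∑ i, v i ^ 2 := by
    have hvi0 : v ⟨d - 1, by omega⟩ = 1 / c1 := by
      rw [hv]; simp
    have h1 : (0:ℝ) < v ⟨d - 1, by omega⟩ ^ 2 := by
      rw [hvi0]; positivity
    have h2 : v ⟨d - 1, by omega⟩ ^ 2 ≤ ∑ i, v i ^ 2 :=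
      Finset.single_le_sum (f := fun i => v i ^ 2) (fun i _ => sq_nonneg _) (mem_univ _)
    linarith
  set N : ℝ := Real.sqrt (∑ i, v i ^ 2) with hNdef
  have hN : 0 < N := Real.sqrt_pos.2 hsum_pos
  have hN2 : N ^ 2 = ∑ i, v i ^ 2 := Real.sq_sqrt hsum_pos.le
  -- key computation for the trilinear form
  have key : ∀ a b c : Fin d → ℝ,
      (∑ i, ∑ j, ∑ k, E i j k * a i * b j * c k)
        = lam * (∑ i, v i * a i) *
            ∑ j ∈ Finset.univ.filter (fun j : Fin d => (j:ℕ) < d - 1), b j * c j := by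
    intro a b c
    have h1 : ∀ i j : Fin d, (∑ k, E i j k * a i * b j * c k)
        = (v i * a i) * (if (j:ℕ) < d - 1 then lam * (b j * c j) else 0) := by
      intro i j
      rw [Finset.sum_eq_single j]
      · simp only [hE]
        by_cases h : (j:ℕ) < d - 1 <;> simp [h] <;> ring
      · intro k _ hk
        simp [hE, Ne.symm hk]
      · simp
    simp only [h1, ← Finset.mul_sum]
    rw [← Finset.sum_mul]
    have hS : (∑ j : Fin d, if (j:ℕ) < d - 1 then lam * (b j * c j) else 0)
        = lam * ∑ j ∈ Finset.univ.filter (fun j : Fin d => (j:ℕ) < d - 1), b j * c j := by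
      rw [Finset.mul_sum, Finset.sum_filter]
    rw [hS]
    ring
  -- Cauchy-Schwarz bounds
  have hub : ∀ s ∈ { s | ∃ a b c : Fin d → ℝ, UnitVec a ∧ UnitVec b ∧ UnitVec c ∧
      s = ∑ i, ∑ j, ∑ k, E i j k * a i * b j * c k }, s ≤ lam * N := by
    rintro s ⟨a, b, c, ha, hb, hc, rfl⟩
    rw [key]
    have hA : |∑ i, v i * a i| ≤ N := by
      have h := cs_sqrt Finset.univ v a
      rw [ha] at h
      simpa using h
    have sub_le : ∀ f : Fin d → ℝ, UnitVec f →
        Real.sqrt (∑ j ∈ Finset.univ.filter (fun j : Fin d => (j:ℕ) < d - 1), f j ^ 2) ≤ 1 := by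
      intro f hf
      rw [show (1:ℝ) = Real.sqrt 1 by simp]
      apply Real.sqrt_le_sqrt
      rw [← hf]
      exact Finset.sum_le_sum_of_subset_of_nonneg (Finset.subset_univ _)
        (fun i _ _ => sq_nonneg _)
    have hB : |∑ j ∈ Finset.univ.filter (fun j : Fin d => (j:ℕ) < d - 1), b j * c j| ≤ 1 := by
      have h := cs_sqrt (Finset.univ.filter (fun j : Fin d => (j:ℕ) < d - 1)) b c
      calc |∑ j ∈ Finset.univ.filter (fun j : Fin d => (j:ℕ) < d - 1), b j * c j|
          ≤ _ := h
        _ ≤ 1 * 1 := mul_le_mul (sub_le b hb) (sub_le c hc) (Real.sqrt_nonneg _) zero_le_one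
        _ = 1 := by ring
    calc lam * (∑ i, v i * a i) *
          ∑ j ∈ Finset.univ.filter (fun j : Fin d => (j:ℕ) < d - 1), b j * c j
        ≤ |lam * (∑ i, v i * a i) *
          ∑ j ∈ Finset.univ.filter (fun j : Fin d => (j:ℕ) < d - 1), b j * c j| := le_abs_self _
      _ = lam * (|∑ i, v i * a i| *
          |∑ j ∈ Finset.univ.filter (fun j : Fin d => (j:ℕ) < d - 1), b j * c j|) := by
          rw [abs_mul, abs_mul, abs_of_pos hlam]; ring
      _ ≤ lam * (N * 1) := by
          apply mul_le_mul_of_nonneg_left _ hlam.le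
          exact mul_le_mul hA hB (abs_nonneg _) hN.le
      _ = lam * N := by ring
  -- the maximizer
  set j0 : Fin d := ⟨0, by omega⟩ with hj0def
  have hj0lt : ((j0:ℕ)) < d - 1 := by simp [hj0def]; omega
  have hmem : lam * N ∈ { s | ∃ a b c : Fin d → ℝ, UnitVec a ∧ UnitVec b ∧ UnitVec c ∧
      s = ∑ i, ∑ j, ∑ k, E i j k * a i * b j * c k } := by
    refine ⟨fun i => v i / N, fun j => if j = j0 then 1 else 0, fun j => if j = j0 then 1 else 0,
      ?_, ?_, ?_, ?_⟩
    · unfold UnitVec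
      simp only [div_pow, ← Finset.sum_div, ← hN2]
      exact div_self (by positivity)
    · unfold UnitVec
      have : ∀ j : Fin d, (if j = j0 then (1:ℝ) else 0) ^ 2 = if j = j0 then 1 else 0 := by
        intro j; split <;> norm_num
      simp [this]
    · unfold UnitVec
      have : ∀ j : Fin d, (if j = j0 then (1:ℝ) else 0) ^ 2 = if j = j0 then 1 else 0 := by
        intro j; split <;> norm_num
      simp [this]
    · rw [key]
      have hbc : (∑ j ∈ Finset.univ.filter (fun j : Fin d => (j:ℕ) < d - 1),
          (if j = j0 then (1:ℝ) else 0) * (if j = j0 then (1:ℝ) else 0)) = 1 := by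
        have : ∀ j : Fin d, (if j = j0 then (1:ℝ) else 0) * (if j = j0 then (1:ℝ) else 0)
            = if j = j0 then 1 else 0 := by intro j; split <;> norm_num
        simp only [this]
        rw [Finset.sum_ite_eq' _ j0 (fun _ => (1:ℝ))]
        simp [hj0lt]
      have hva : (∑ i, v i * (v i / N)) = N := by
        have : ∀ i : Fin d, v i * (v i / N) = v i ^ 2 / N := by intro i; ring
        simp only [this, ← Finset.sum_div, ← hN2]
        field_simp
      rw [hbc, hva, mul_one]
  have hspec : specNorm3 E = lam * N := by
    unfold specNorm3
    exact IsGreatest.csSup_eq ⟨hmem, hub⟩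
  -- mat1Norm lower bound
  have hbdd : BddAbove { s | ∃ (x : Fin d → ℝ) (y : Fin d × Fin d → ℝ),
      UnitVec x ∧ (∑ jk, y jk ^ 2 = 1) ∧
      s = ∑ i, ∑ jk : Fin d × Fin d, E i jk.1 jk.2 * x i * y jk } := by
    refine ⟨∑ i, ∑ jk : Fin d × Fin d, |E i jk.1 jk.2|, ?_⟩
    rintro s ⟨x, y, hx, hy, rfl⟩
    have hx1 : ∀ i, |x i| ≤ 1 := by
      intro i
      have h2 : x i ^ 2 ≤ 1 := by
        rw [← hx]
        exact Finset.single_le_sum (f := fun i => x i ^ 2) (fun i _ => sq_nonneg _) (mem_univ _)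
      nlinarith [abs_nonneg (x i), sq_abs (x i)]
    have hy1 : ∀ jk, |y jk| ≤ 1 := by
      intro jk
      have h2 : y jk ^ 2 ≤ 1 := by
        rw [← hy]
        exact Finset.single_le_sum (f := fun jk => y jk ^ 2) (fun jk _ => sq_nonneg _) (mem_univ _)
      nlinarith [abs_nonneg (y jk), sq_abs (y jk)]
    refine Finset.sum_le_sum fun i _ => Finset.sum_le_sum fun jk _ => ?_
    calc E i jk.1 jk.2 * x i * y jk ≤ |E i jk.1 jk.2 * x i * y jk| := le_abs_self _
      _ = |E i jk.1 jk.2| * |x i| * |y jk| := by rw [abs_mul, abs_mul]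
      _ ≤ |E i jk.1 jk.2| * 1 * 1 := by
          apply mul_le_mul (mul_le_mul le_rfl (hx1 i) (abs_nonneg _) (abs_nonneg _)) (hy1 jk)
            (abs_nonneg _) (by positivity)
      _ = |E i jk.1 jk.2| := by ring
  -- key computation for the matricized form
  have key2 : ∀ (x : Fin d → ℝ) (y : Fin d × Fin d → ℝ),
      (∑ i, ∑ jk : Fin d × Fin d, E i jk.1 jk.2 * x i * y jk)
        = lam * (∑ i, v i * x i) *
            ∑ j ∈ Finset.univ.filter (fun j : Fin d => (j:ℕ) < d - 1), y (j, j) := by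
    intro x y
    have h1 : ∀ i j : Fin d, (∑ k, E i j k * x i * y (j, k))
        = (v i * x i) * (if (j:ℕ) < d - 1 then lam * y (j, j) else 0) := by
      intro i j
      rw [Finset.sum_eq_single j]
      · simp only [hE]
        by_cases h : (j:ℕ) < d - 1 <;> simp [h] <;> ring
      · intro k _ hk
        simp [hE, Ne.symm hk]
      · simp
    have h2 : ∀ i : Fin d, (∑ jk : Fin d × Fin d, E i jk.1 jk.2 * x i * y jk)
        = (v i * x i) * ∑ j : Fin d, (if (j:ℕ) < d - 1 then lam * y (j, j) else 0) := by
      intro i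
      rw [Fintype.sum_prod_type, Finset.mul_sum]
      exact Finset.sum_congr rfl fun j _ => h1 i j
    simp only [h2]
    rw [← Finset.sum_mul]
    have hS : (∑ j : Fin d, if (j:ℕ) < d - 1 then lam * y (j, j) else 0)
        = lam * ∑ j ∈ Finset.univ.filter (fun j : Fin d => (j:ℕ) < d - 1), y (j, j) := by
      rw [Finset.mul_sum, Finset.sum_filter]
    rw [hS]
    ring
  -- count of the diagonal indices
  have hcard : (∑ j : Fin d, (if (j:ℕ) < d - 1 then (1:ℝ) else 0)) = (d:ℝ) - 1 := by
    rw [Fin.sum_univ_eq_sum_range (fun i => if i < d - 1 then (1:ℝ) else 0) d]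
    rw [← Finset.sum_filter]
    have hfl : (Finset.range d).filter (fun i => i < d - 1) = Finset.range (d - 1) := by
      ext i; simp; omega
    rw [hfl, Finset.sum_const, nsmul_eq_mul, mul_one, Finset.card_range,
      Nat.cast_sub (by omega), Nat.cast_one]
  have hmem2 : c1 * (lam * N) ∈ { s | ∃ (x : Fin d → ℝ) (y : Fin d × Fin d → ℝ),
      UnitVec x ∧ (∑ jk, y jk ^ 2 = 1) ∧
      s = ∑ i, ∑ jk : Fin d × Fin d, E i jk.1 jk.2 * x i * y jk } := by
    refine ⟨fun i => v i / N,
      fun jk => if jk.1 = jk.2 ∧ (jk.1:ℕ) < d - 1 then 1 / c1 else 0, ?_, ?_, ?_⟩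
    · unfold UnitVec
      simp only [div_pow, ← Finset.sum_div, ← hN2]
      exact div_self (by positivity)
    · rw [Fintype.sum_prod_type]
      have h1 : ∀ j : Fin d, (∑ k : Fin d,
          (if j = k ∧ (j:ℕ) < d - 1 then 1 / c1 else (0:ℝ)) ^ 2)
          = if (j:ℕ) < d - 1 then 1 / ((d:ℝ) - 1) else 0 := by
        intro j
        rw [Finset.sum_eq_single j]
        · by_cases h : (j:ℕ) < d - 1 <;> simp [h, div_pow, hc1sq]
        · intro k _ hk; simp [Ne.symm hk]
        · simp
      simp only [h1]
      have h2 : ∀ j : Fin d, (if (j:ℕ) < d - 1 then 1 / ((d:ℝ) - 1) else 0)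
          = (1 / ((d:ℝ) - 1)) * (if (j:ℕ) < d - 1 then 1 else 0) := by
        intro j; split <;> ring
      simp only [h2, ← Finset.mul_sum, hcard]
      field_simp
    · rw [key2]
      have hva : (∑ i, v i * (v i / N)) = N := by
        have : ∀ i : Fin d, v i * (v i / N) = v i ^ 2 / N := by intro i; ring
        simp only [this, ← Finset.sum_div, ← hN2]
        field_simp
      have hcard' : ((Finset.univ.filter (fun j : Fin d => (j:ℕ) < d - 1)).card : ℝ)
          = (d:ℝ) - 1 := by
        rw [← hcard, Finset.sum_boole]
      have hterm : ∀ j ∈ Finset.univ.filter (fun j : Fin d => (j:ℕ) < d - 1),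
          (if (j, j).1 = (j, j).2 ∧ ((j, j).1 : ℕ) < d - 1 then 1 / c1 else (0:ℝ)) = 1 / c1 := by
        intro j hj
        simp only [Finset.mem_filter, Finset.mem_univ, true_and] at hj
        simp [hj]
      have hyd : (∑ j ∈ Finset.univ.filter (fun j : Fin d => (j:ℕ) < d - 1),
          (if (j, j).1 = (j, j).2 ∧ ((j, j).1 : ℕ) < d - 1 then 1 / c1 else (0:ℝ))) = c1 := by
        rw [Finset.sum_congr rfl hterm, Finset.sum_const, nsmul_eq_mul, hcard', ← hc1sq, sq]
        field_simp
      rw [hva, hyd]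
      ring
  have hmat : c1 * (lam * N) ≤ mat1Norm E := le_csSup hbdd hmem2
  exact ⟨hspec, hmat, by rw [hspec]; exact hmat⟩
end

section
/- Let $\mathscr{X}=\sum_{k=1}^r \eta_k\, a_k^{(1)}\otimes\cdots\otimes a_k^{(p)}$ with $\eta_1\ge\cdots\ge\eta_r>0$ and unit vectors $a_k^{(q)}$, where for each $q$ the matrix $A^{(q)}=[a_1^{(q)}\cdots a_r^{(q)}]$ has all singular values in $[1-\delta,1+\delta]$ for some $0\le\delta<1$. Let $U^{(q)}$ be the polar factor of $A^{(q)}$ with columns $u_k^{(q)}$, and set $\mathscr{T}=\sum_{k=1}^r\eta_k\, u_k^{(1)}\otimes\cdots\otimes u_k^{(p)}$. Then $\|\mathscr{X}-\mathscr{T}\|\le(p+1)\delta\,\eta_1$ in tensor spectral norm. -/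
open Finset Real Matrix

/-- Tensor spectral norm. -/
noncomputable def specNorm {p d : ℕ} (T : (Fin p → Fin d) → ℝ) : ℝ :=
  sSup { v | ∃ x : Fin p → Fin d → ℝ, (∀ q, UnitVec (x q)) ∧ v = tInner T x }

namespace Stmt8Aux

open RealInnerProductSpace

noncomputable def nsq {n : ℕ} (v : Fin n → ℝ) : ℝ := ∑ j, v j ^ 2

lemma nsq_nonneg {n : ℕ} (v : Fin n → ℝ) : 0 ≤ nsq v :=
  Finset.sum_nonneg fun _ _ => sq_nonneg _

lemma nsq_eq_dot {n : ℕ} (v : Fin n → ℝ) : nsq v = v ⬝ᵥ v := by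
  simp [nsq, dotProduct, sq]

lemma nsq_smul {n : ℕ} (s : ℝ) (v : Fin n → ℝ) : nsq (s • v) = s ^ 2 * nsq v := by
  simp [nsq, Finset.mul_sum, mul_pow]

lemma nsq_eq_zero {n : ℕ} {v : Fin n → ℝ} (h : nsq v = 0) : v = 0 := by
  funext j
  have h2 := (Finset.sum_eq_zero_iff_of_nonneg (fun i _ => sq_nonneg (v i))).1 h j
    (Finset.mem_univ j)
  exact pow_eq_zero_iff (two_ne_zero) |>.1 h2

lemma dot_transpose {d r : ℕ} (M : Matrix (Fin d) (Fin r) ℝ) (y : Fin r → ℝ) (x : Fin d → ℝ) :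
    y ⬝ᵥ (Mᵀ *ᵥ x) = (M *ᵥ y) ⬝ᵥ x := by
  rw [Matrix.dotProduct_mulVec, Matrix.vecMul_transpose, dotProduct_comm]

lemma dot_symm {r : ℕ} (M : Matrix (Fin r) (Fin r) ℝ) (hM : Mᵀ = M) (u v : Fin r → ℝ) :
    (M *ᵥ u) ⬝ᵥ v = u ⬝ᵥ (M *ᵥ v) := by
  simp only [dotProduct, mulVec, Finset.sum_mul, Finset.mul_sum]
  rw [Finset.sum_comm]
  refine Finset.sum_congr rfl fun i _ => Finset.sum_congr rfl fun j _ => ?_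
  have h : M i j = M j i := by conv_lhs => rw [← hM, Matrix.transpose_apply]
  rw [h]; ring

lemma mulVec_nsq_le {d r : ℕ} (M : Matrix (Fin d) (Fin r) ℝ) (c : ℝ)
    (h : ∀ v : Fin r → ℝ, nsq v = 1 → nsq (M *ᵥ v) ≤ c ^ 2) (v : Fin r → ℝ) :
    nsq (M *ᵥ v) ≤ c ^ 2 * nsq v := by
  rcases eq_or_lt_of_le (nsq_nonneg v) with h0 | h0
  · rw [nsq_eq_zero h0.symm]
    simp [Matrix.mulVec_zero, nsq]
  · set t := Real.sqrt (nsq v) with ht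
    have ht2 : t ^ 2 = nsq v := Real.sq_sqrt (nsq_nonneg v)
    have htpos : 0 < t := Real.sqrt_pos.2 h0
    have h1 := h (t⁻¹ • v) ?_
    · rw [Matrix.mulVec_smul, nsq_smul] at h1
      have hcan : t ^ 2 * t⁻¹ ^ 2 = 1 := by
        field_simp
      calc nsq (M *ᵥ v) = t ^ 2 * (t⁻¹ ^ 2 * nsq (M *ᵥ v)) := by
            rw [← mul_assoc, hcan, one_mul]
        _ ≤ t ^ 2 * c ^ 2 := mul_le_mul_of_nonneg_left h1 (sq_nonneg t)
        _ = c ^ 2 * nsq v := by rw [ht2]; ring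
    · rw [nsq_smul, inv_pow, ht2, inv_mul_cancel₀ h0.ne']

lemma mulVec_nsq_ge {d r : ℕ} (M : Matrix (Fin d) (Fin r) ℝ) (c : ℝ)
    (h : ∀ v : Fin r → ℝ, nsq v = 1 → c ^ 2 ≤ nsq (M *ᵥ v)) (v : Fin r → ℝ) :
    c ^ 2 * nsq v ≤ nsq (M *ᵥ v) := by
  rcases eq_or_lt_of_le (nsq_nonneg v) with h0 | h0
  · rw [nsq_eq_zero h0.symm]
    simp [Matrix.mulVec_zero, nsq, ← h0]
  · set t := Real.sqrt (nsq v) with ht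
    have ht2 : t ^ 2 = nsq v := Real.sq_sqrt (nsq_nonneg v)
    have htpos : 0 < t := Real.sqrt_pos.2 h0
    have h1 := h (t⁻¹ • v) ?_
    · rw [Matrix.mulVec_smul, nsq_smul] at h1
      have hcan : t ^ 2 * t⁻¹ ^ 2 = 1 := by
        field_simp
      calc c ^ 2 * nsq v = t ^ 2 * c ^ 2 := by rw [ht2]; ring
        _ ≤ t ^ 2 * (t⁻¹ ^ 2 * nsq (M *ᵥ v)) := mul_le_mul_of_nonneg_left h1 (sq_nonneg t)
        _ = nsq (M *ᵥ v) := by rw [← mul_assoc, hcan, one_mul]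
    · rw [nsq_smul, inv_pow, ht2, inv_mul_cancel₀ h0.ne']

lemma transpose_nsq_le {d r : ℕ} (M : Matrix (Fin d) (Fin r) ℝ) (c : ℝ)
    (h : ∀ v : Fin r → ℝ, nsq (M *ᵥ v) ≤ c ^ 2 * nsq v) (x : Fin d → ℝ) :
    nsq (Mᵀ *ᵥ x) ≤ c ^ 2 * nsq x := by
  set y := Mᵀ *ᵥ x with hy
  have h1 : nsq y = (M *ᵥ y) ⬝ᵥ x := by
    rw [nsq_eq_dot]
    nth_rewrite 2 [hy]
    exact dot_transpose M y x
  have h2 : ((M *ᵥ y) ⬝ᵥ x) ^ 2 ≤ nsq (M *ᵥ y) * nsq x := by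
    have h3 := Finset.sum_mul_sq_le_sq_mul_sq Finset.univ (M *ᵥ y) x
    simpa [nsq, dotProduct] using h3
  have key : nsq y ^ 2 ≤ c ^ 2 * nsq y * nsq x := by
    calc nsq y ^ 2 = ((M *ᵥ y) ⬝ᵥ x) ^ 2 := by rw [h1]
      _ ≤ nsq (M *ᵥ y) * nsq x := h2
      _ ≤ (c ^ 2 * nsq y) * nsq x := mul_le_mul_of_nonneg_right (h y) (nsq_nonneg x)
      _ = c ^ 2 * nsq y * nsq x := by ring
  rcases eq_or_lt_of_le (nsq_nonneg y) with h0 | h0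
  · rw [← h0]
    exact mul_nonneg (sq_nonneg c) (nsq_nonneg x)
  · nlinarith [key, h0]

lemma weighted_cs {r : ℕ} (η c d : Fin r → ℝ) (W Cc Cd : ℝ)
    (hW0 : 0 ≤ W) (hW : ∀ k, 0 ≤ η k ∧ η k ≤ W)
    (hCc : 0 ≤ Cc) (hCd : 0 ≤ Cd)
    (hc : ∑ k, c k ^ 2 ≤ Cc ^ 2) (hd : ∑ k, d k ^ 2 ≤ Cd ^ 2) :
    |∑ k, η k * (c k * d k)| ≤ W * (Cc * Cd) := by
  have h2 : ∑ k, |c k| * |d k| ≤ Cc * Cd := by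
    have hs := Finset.sum_mul_sq_le_sq_mul_sq Finset.univ (fun k => |c k|) fun k => |d k|
    simp only [sq_abs] at hs
    have hnn : 0 ≤ ∑ k, |c k| * |d k| :=
      Finset.sum_nonneg fun k _ => mul_nonneg (abs_nonneg _) (abs_nonneg _)
    have hsq : (∑ k, |c k| * |d k|) ^ 2 ≤ (Cc * Cd) ^ 2 := by
      calc (∑ k, |c k| * |d k|) ^ 2 ≤ (∑ k, c k ^ 2) * ∑ k, d k ^ 2 := hs
        _ ≤ Cc ^ 2 * Cd ^ 2 := mul_le_mul hc hd
            (Finset.sum_nonneg fun k _ => sq_nonneg _) (sq_nonneg Cc)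
        _ = (Cc * Cd) ^ 2 := by ring
    nlinarith [hsq, hnn, mul_nonneg hCc hCd]
  calc |∑ k, η k * (c k * d k)| ≤ ∑ k, |η k * (c k * d k)| := Finset.abs_sum_le_sum_abs _ _
    _ ≤ ∑ k, W * (|c k| * |d k|) := by
        refine Finset.sum_le_sum fun k _ => ?_
        rw [abs_mul, abs_mul, abs_of_nonneg (hW k).1]
        exact mul_le_mul_of_nonneg_right (hW k).2 (mul_nonneg (abs_nonneg _) (abs_nonneg _))
    _ = W * ∑ k, |c k| * |d k| := by rw [Finset.mul_sum]
    _ ≤ W * (Cc * Cd) := mul_le_mul_of_nonneg_left h2 hW0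

lemma telescope (p : ℕ) (a b : ℕ → ℝ) :
    (∏ j ∈ Finset.range p, a j) - ∏ j ∈ Finset.range p, b j
      = ∑ q ∈ Finset.range p,
          (a q - b q) * ((∏ j ∈ Finset.range q, b j) * ∏ j ∈ Finset.Ico (q + 1) p, a j) := by
  have key : ∑ q ∈ Finset.range p, ((∏ j ∈ Finset.range q, b j) * ∏ j ∈ Finset.Ico q p, a j
      - (∏ j ∈ Finset.range (q + 1), b j) * ∏ j ∈ Finset.Ico (q + 1) p, a j)
      = (∏ j ∈ Finset.range 0, b j) * (∏ j ∈ Finset.Ico 0 p, a j)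
        - (∏ j ∈ Finset.range p, b j) * ∏ j ∈ Finset.Ico p p, a j :=
    Finset.sum_range_sub' (fun q => (∏ j ∈ Finset.range q, b j) * ∏ j ∈ Finset.Ico q p, a j) p
  rw [Finset.range_zero, Finset.prod_empty, one_mul, Finset.Ico_self, Finset.prod_empty,
    mul_one, ← Finset.range_eq_Ico] at key
  rw [← key]
  refine Finset.sum_congr rfl fun q hq => ?_
  have hq' : q < p := Finset.mem_range.1 hq
  rw [Finset.prod_eq_prod_Ico_succ_bot hq' a, Finset.prod_range_succ]
  ring

lemma prod_sq_le_single {s : Finset ℕ} {e : ℕ} (he : e ∈ s) (f : ℕ → ℝ)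
    (h1 : ∀ j ∈ s, f j ^ 2 ≤ 1) : (∏ j ∈ s, f j) ^ 2 ≤ f e ^ 2 := by
  rw [← Finset.prod_pow, ← Finset.mul_prod_erase s (fun j => f j ^ 2) he]
  have h2 : ∏ j ∈ s.erase e, f j ^ 2 ≤ 1 :=
    Finset.prod_le_one (fun j _ => sq_nonneg _) fun j hj => h1 j (Finset.mem_of_mem_erase hj)
  have h3 : 0 ≤ ∏ j ∈ s.erase e, f j ^ 2 :=
    Finset.prod_nonneg fun j _ => sq_nonneg _
  nlinarith [sq_nonneg (f e)]

lemma psd_spread {r : ℕ} (δ : ℝ) (hδ0 : 0 ≤ δ) (hδ1 : δ < 1)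
    (P : Matrix (Fin r) (Fin r) ℝ) (hP : P.PosSemidef)
    (hev : ∀ v : Fin r → ℝ, nsq v = 1 →
      (1 - δ) ^ 2 ≤ nsq (P *ᵥ v) ∧ nsq (P *ᵥ v) ≤ (1 + δ) ^ 2)
    (w : Fin r → ℝ) : nsq ((P - 1) *ᵥ w) ≤ δ ^ 2 * nsq w := by
  classical
  have hH : P.IsHermitian := hP.1
  have hPsymm : Pᵀ = P := by
    rw [← Matrix.conjTranspose_eq_transpose_of_trivial]; exact hH
  set B := hH.eigenvectorBasis with hB
  set μ := hH.eigenvalues with hμ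
  have hBunit : ∀ i, nsq (B i) = 1 := by
    intro i
    have h := B.orthonormal.1 i
    have h2 : ⟪B i, B i⟫ = (1 : ℝ) := by rw [real_inner_self_eq_norm_sq, h]; norm_num
    rw [← h2]
    simp only [nsq, PiLp.inner_apply, sq, RCLike.inner_apply, conj_trivial]
  have hmu : ∀ i, (μ i - 1) ^ 2 ≤ δ ^ 2 := by
    intro i
    have hvu := hBunit i
    have hPv : P *ᵥ (B i) = μ i • (B i : Fin r → ℝ) := hH.mulVec_eigenvectorBasis i
    have h1 : nsq (P *ᵥ (B i)) = μ i ^ 2 := by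
      rw [hPv, nsq_smul, hvu, mul_one]
    have h2 := hev (B i) hvu
    rw [h1] at h2
    have h3 : 0 ≤ μ i := hP.eigenvalues_nonneg i
    nlinarith [h2.1, h2.2, h3, hδ0, hδ1]
  have hdotinner : ∀ u v : EuclideanSpace ℝ (Fin r), ⟪u, v⟫ = ∑ i, u i * v i := by
    intro u v; simp [PiLp.inner_apply, mul_comm]
  have hinner : ∀ u v : EuclideanSpace ℝ (Fin r), ⟪u, v⟫ = ∑ i, ⟪B i, u⟫ * ⟪B i, v⟫ := by
    intro u v
    rw [← B.sum_inner_mul_inner u v]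
    simp [PiLp.inner_apply, mul_comm]
  have hsub : (P - 1)ᵀ = P - 1 := by
    rw [Matrix.transpose_sub, hPsymm, Matrix.transpose_one]
  have hcoef : ∀ i, ((B i : Fin r → ℝ) ⬝ᵥ ((P - 1) *ᵥ w))
      = (μ i - 1) * ((B i : Fin r → ℝ) ⬝ᵥ w) := by
    intro i
    have h5 : P *ᵥ (B i : Fin r → ℝ) = μ i • (B i : Fin r → ℝ) := hH.mulVec_eigenvectorBasis i
    have hPv : (P - 1) *ᵥ (B i : Fin r → ℝ) = (μ i - 1) • (B i : Fin r → ℝ) := by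
      rw [Matrix.sub_mulVec, Matrix.one_mulVec, h5, sub_smul, one_smul]
    rw [← dot_symm (P - 1) hsub, hPv, smul_dotProduct]
    rfl
  have hexp : ∀ v : EuclideanSpace ℝ (Fin r), nsq v = ∑ i, ((B i : Fin r → ℝ) ⬝ᵥ v) ^ 2 := by
    intro v
    have h1 : nsq v = ⟪v, v⟫ := by
      rw [hdotinner]; simp [nsq, sq]
    rw [h1, hinner v v]
    refine Finset.sum_congr rfl fun i _ => ?_
    rw [hdotinner]
    simp [dotProduct, sq]
  have e1 := hexp (WithLp.toLp 2 ((P - 1) *ᵥ w))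
  have e2 := hexp (WithLp.toLp 2 w)
  simp only [WithLp.ofLp_toLp] at e1 e2
  rw [e1, e2, Finset.mul_sum]
  refine Finset.sum_le_sum fun i _ => ?_
  rw [hcoef i, mul_pow]
  exact mul_le_mul_of_nonneg_right (hmu i) (sq_nonneg _)

lemma polar_facts {d r : ℕ} (δ : ℝ) (hδ0 : 0 ≤ δ) (hδ1 : δ < 1)
    (A : Matrix (Fin d) (Fin r) ℝ)
    (hsv : ∀ x : Fin r → ℝ, nsq x = 1 →
      (1 - δ) ^ 2 ≤ nsq (A *ᵥ x) ∧ nsq (A *ᵥ x) ≤ (1 + δ) ^ 2)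
    (P : Matrix (Fin r) (Fin r) ℝ) (hP : P.PosSemidef) (hPP : P * P = Aᵀ * A)
    (U : Matrix (Fin d) (Fin r) ℝ) (hU : U = A * P⁻¹) :
    (∀ k, ∑ j, U j k ^ 2 = 1) ∧
    (∀ x : Fin d → ℝ, nsq (Uᵀ *ᵥ x) ≤ nsq x) ∧
    (∀ x : Fin d → ℝ, nsq (Aᵀ *ᵥ x) ≤ (1 + δ) ^ 2 * nsq x) ∧
    (∀ x : Fin d → ℝ, nsq (Aᵀ *ᵥ x - Uᵀ *ᵥ x) ≤ δ ^ 2 * nsq x) := by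
  classical
  have hPsymm : Pᵀ = P := by
    rw [← Matrix.conjTranspose_eq_transpose_of_trivial]; exact hP.1
  have h1δ : (0:ℝ) < 1 - δ := by linarith
  have hAAposdef : (Aᵀ * A).PosDef := by
    refine Matrix.posDef_iff_dotProduct_mulVec.2
      ⟨by simpa using Matrix.isHermitian_conjTranspose_mul_self A, fun v hv => ?_⟩
    have e : v ⬝ᵥ ((Aᵀ * A) *ᵥ v) = nsq (A *ᵥ v) := by
      rw [← Matrix.mulVec_mulVec, dot_transpose, ← nsq_eq_dot]
    have hnv : 0 < nsq v := by
      rcases eq_or_lt_of_le (nsq_nonneg v) with h0 | h0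
      · exact absurd (nsq_eq_zero h0.symm) hv
      · exact h0
    have hlow := mulVec_nsq_ge A (1 - δ) (fun u hu => (hsv u hu).1) v
    have hsv' : star v = v := by simp
    rw [hsv', e]
    calc (0:ℝ) < (1 - δ) ^ 2 * nsq v := mul_pos (pow_pos h1δ 2) hnv
      _ ≤ nsq (A *ᵥ v) := hlow
  have hdet : IsUnit P.det := by
    have h2 : P.det * P.det = (Aᵀ * A).det := by rw [← Matrix.det_mul, hPP]
    have h3 : (Aᵀ * A).det ≠ 0 := hAAposdef.det_pos.ne'
    have h4 : P.det ≠ 0 := fun h => h3 (by rw [← h2, h, mul_zero])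
    exact h4.isUnit
  have hPinv : P⁻¹ * P = 1 := Matrix.nonsing_inv_mul P hdet
  have hPinv' : P * P⁻¹ = 1 := Matrix.mul_nonsing_inv P hdet
  have hUtU : Uᵀ * U = 1 := by
    rw [hU, Matrix.transpose_mul, Matrix.transpose_nonsing_inv, hPsymm]
    have e1 : P⁻¹ * Aᵀ * (A * P⁻¹) = P⁻¹ * (Aᵀ * A * P⁻¹) := by
      rw [Matrix.mul_assoc, Matrix.mul_assoc]
    rw [e1, ← hPP, Matrix.mul_assoc P P P⁻¹, hPinv', Matrix.mul_one, hPinv]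
  have hUiso : ∀ v : Fin r → ℝ, nsq (U *ᵥ v) = nsq v := by
    intro v
    rw [nsq_eq_dot, nsq_eq_dot, ← dot_transpose U v (U *ᵥ v), Matrix.mulVec_mulVec,
      hUtU, Matrix.one_mulVec]
  have c2 : ∀ x : Fin d → ℝ, nsq (Uᵀ *ᵥ x) ≤ nsq x := by
    intro x
    have h5 := transpose_nsq_le U 1 (fun v => le_of_eq (by rw [hUiso v]; ring)) x
    simpa using h5
  have c1 : ∀ k, ∑ j, U j k ^ 2 = 1 := by
    intro k
    have h := congrFun (congrFun hUtU k) k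
    simp [Matrix.mul_apply, Matrix.transpose_apply, Matrix.one_apply] at h
    simpa [sq] using h
  have c3 : ∀ x, nsq (Aᵀ *ᵥ x) ≤ (1 + δ) ^ 2 * nsq x :=
    transpose_nsq_le A (1 + δ) (mulVec_nsq_le A (1 + δ) fun u hu => (hsv u hu).2)
  have hev : ∀ v : Fin r → ℝ, nsq v = 1 →
      (1 - δ) ^ 2 ≤ nsq (P *ᵥ v) ∧ nsq (P *ᵥ v) ≤ (1 + δ) ^ 2 := by
    intro v hv
    have e : nsq (P *ᵥ v) = nsq (A *ᵥ v) := by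
      rw [nsq_eq_dot, nsq_eq_dot, dot_symm P hPsymm v (P *ᵥ v), Matrix.mulVec_mulVec, hPP,
        ← Matrix.mulVec_mulVec, dot_transpose A v (A *ᵥ v)]
    rw [e]; exact hsv v hv
  have c4 : ∀ x, nsq (Aᵀ *ᵥ x - Uᵀ *ᵥ x) ≤ δ ^ 2 * nsq x := by
    intro x
    have hAU : A = U * P := by rw [hU, Matrix.mul_assoc, hPinv, Matrix.mul_one]
    have hdiff : Aᵀ *ᵥ x - Uᵀ *ᵥ x = (P - 1) *ᵥ (Uᵀ *ᵥ x) := by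
      rw [Matrix.sub_mulVec, Matrix.one_mulVec]
      congr 1
      rw [Matrix.mulVec_mulVec]
      conv_lhs => rw [hAU, Matrix.transpose_mul, hPsymm]
    rw [hdiff]
    calc nsq ((P - 1) *ᵥ (Uᵀ *ᵥ x)) ≤ δ ^ 2 * nsq (Uᵀ *ᵥ x) :=
          psd_spread δ hδ0 hδ1 P hP hev (Uᵀ *ᵥ x)
      _ ≤ δ ^ 2 * nsq x := mul_le_mul_of_nonneg_left (c2 x) (sq_nonneg δ)
  exact ⟨c1, c2, c3, c4⟩

lemma tInner_rank_one {p d r : ℕ} (η : Fin r → ℝ) (M : Fin p → Matrix (Fin d) (Fin r) ℝ)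
    (x : Fin p → Fin d → ℝ) :
    tInner (fun i => ∑ k, η k * ∏ q, M q (i q) k) x
      = ∑ k, η k * ∏ q, ∑ j, M q j k * x q j := by
  unfold tInner
  simp only [Finset.sum_mul]
  rw [Finset.sum_comm]
  refine Finset.sum_congr rfl fun k _ => ?_
  have e1 : ∀ i : Fin p → Fin d, η k * (∏ q, M q (i q) k) * ∏ q, x q (i q)
      = η k * ∏ q, (M q (i q) k * x q (i q)) := by
    intro i; rw [mul_assoc, ← Finset.prod_mul_distrib]
  calc ∑ i : Fin p → Fin d, η k * (∏ q, M q (i q) k) * ∏ q, x q (i q)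
      = ∑ i : Fin p → Fin d, η k * ∏ q, (M q (i q) k * x q (i q)) :=
        Finset.sum_congr rfl fun i _ => e1 i
    _ = η k * ∑ i : Fin p → Fin d, ∏ q, (M q (i q) k * x q (i q)) := by rw [Finset.mul_sum]
    _ = η k * ∏ q, ∑ j, M q j k * x q j := by
        congr 1
        rw [Finset.prod_univ_sum (fun _ => Finset.univ) fun q j => M q j k * x q j,
          Fintype.piFinset_univ]

end Stmt8Aux

open Stmt8Aux in
/-- Let `X = ∑_k η_k a_k^{(1)} ⊗ ⋯ ⊗ a_k^{(p)}` with `η₁ ≥ ⋯ ≥ η_r > 0`, unit columns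
`a_k^{(q)}` of `A^{(q)}`, and all singular values of each `A^{(q)}` in `[1-δ, 1+δ]`
(`0 ≤ δ < 1`). If `U^{(q)}` is the polar factor of `A^{(q)}` and
`T = ∑_k η_k u_k^{(1)} ⊗ ⋯ ⊗ u_k^{(p)}`, then `‖X - T‖ ≤ (p+1) δ η₁`. -/
theorem stmt8 (p d r : ℕ) (hp : 3 ≤ p) (hr : 0 < r)
    (δ : ℝ) (hδ0 : 0 ≤ δ) (hδ1 : δ < 1)
    (η : Fin r → ℝ) (hpos : ∀ k, 0 < η k) (hmono : ∀ k l : Fin r, k ≤ l → η l ≤ η k)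
    (A : Fin p → Matrix (Fin d) (Fin r) ℝ)
    (hcol : ∀ q k, ∑ i, (A q i k) ^ 2 = 1)
    (hsv : ∀ q (x : Fin r → ℝ), (∑ j, x j ^ 2 = 1) →
      ((1 - δ) ^ 2 ≤ ∑ i, ((A q).mulVec x i) ^ 2) ∧
      (∑ i, ((A q).mulVec x i) ^ 2 ≤ (1 + δ) ^ 2))
    (P : Fin p → Matrix (Fin r) (Fin r) ℝ)
    (hP : ∀ q, (P q).PosSemidef) (hPP : ∀ q, P q * P q = (A q)ᵀ * A q)
    (U : Fin p → Matrix (Fin d) (Fin r) ℝ) (hU : ∀ q, U q = A q * (P q)⁻¹)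
    (X T : (Fin p → Fin d) → ℝ)
    (hX : ∀ i, X i = ∑ k, η k * ∏ q, A q (i q) k)
    (hT : ∀ i, T i = ∑ k, η k * ∏ q, U q (i q) k) :
    specNorm (fun i => X i - T i) ≤ (p + 1) * δ * η ⟨0, hr⟩ := by
  classical
  have hη0 : 0 < η ⟨0, hr⟩ := hpos _
  have hbound0 : 0 ≤ (p + 1 : ℝ) * δ * η ⟨0, hr⟩ :=
    mul_nonneg (mul_nonneg (by positivity) hδ0) hη0.le
  unfold specNorm
  refine Real.sSup_le ?_ hbound0
  rintro v ⟨x, hxu, rfl⟩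
  have hx1 : ∀ q, nsq (x q) = 1 := fun q => hxu q
  have hx1' : ∀ q, ∑ j, x q j ^ 2 = 1 := fun q => hxu q
  have hfacts := fun q => polar_facts δ hδ0 hδ1 (A q)
      (fun u hu => hsv q u hu) (P q) (hP q) (hPP q) (U q) (hU q)
  have hUcol : ∀ q k, ∑ j, U q j k ^ 2 = 1 := fun q => (hfacts q).1
  have hUtr : ∀ q (x' : Fin d → ℝ), nsq ((U q)ᵀ *ᵥ x') ≤ nsq x' := fun q => (hfacts q).2.1
  have hAtr : ∀ q (x' : Fin d → ℝ), nsq ((A q)ᵀ *ᵥ x') ≤ (1 + δ) ^ 2 * nsq x' :=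
    fun q => (hfacts q).2.2.1
  have hDtr : ∀ q (x' : Fin d → ℝ), nsq ((A q)ᵀ *ᵥ x' - (U q)ᵀ *ᵥ x') ≤ δ ^ 2 * nsq x' :=
    fun q => (hfacts q).2.2.2
  -- scalar products with columns
  set α : Fin p → Fin r → ℝ := fun q k => ∑ j, A q j k * x q j with hα
  set β : Fin p → Fin r → ℝ := fun q k => ∑ j, U q j k * x q j with hβ
  have hαvec : ∀ q, α q = (A q)ᵀ *ᵥ x q := by
    intro q; funext k
    simp [hα, Matrix.mulVec, dotProduct, Matrix.transpose_apply]
  have hβvec : ∀ q, β q = (U q)ᵀ *ᵥ x q := by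
    intro q; funext k
    simp [hβ, Matrix.mulVec, dotProduct, Matrix.transpose_apply]
  have hα1 : ∀ q k, (α q k) ^ 2 ≤ 1 := by
    intro q k
    have h := Finset.sum_mul_sq_le_sq_mul_sq Finset.univ (fun j => A q j k) (x q)
    simp only [hα]
    calc (∑ j, A q j k * x q j) ^ 2 ≤ (∑ j, A q j k ^ 2) * ∑ j, x q j ^ 2 := by simpa using h
      _ = 1 := by rw [hcol q k, hx1' q, mul_one]
  have hβ1 : ∀ q k, (β q k) ^ 2 ≤ 1 := by
    intro q k
    have h := Finset.sum_mul_sq_le_sq_mul_sq Finset.univ (fun j => U q j k) (x q)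
    simp only [hβ]
    calc (∑ j, U q j k * x q j) ^ 2 ≤ (∑ j, U q j k ^ 2) * ∑ j, x q j ^ 2 := by simpa using h
      _ = 1 := by rw [hUcol q k, hx1' q, mul_one]
  -- extended sequences over ℕ
  set a' : ℕ → Fin r → ℝ := fun j k => if h : j < p then α ⟨j, h⟩ k else 1 with ha'
  set b' : ℕ → Fin r → ℝ := fun j k => if h : j < p then β ⟨j, h⟩ k else 1 with hb'
  have ha'lt : ∀ (j : ℕ) (h : j < p) (k : Fin r), a' j k = α ⟨j, h⟩ k := by
    intro j h k; simp [ha', dif_pos h]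
  have hb'lt : ∀ (j : ℕ) (h : j < p) (k : Fin r), b' j k = β ⟨j, h⟩ k := by
    intro j h k; simp [hb', dif_pos h]
  have ha'sq : ∀ (j : ℕ) (k : Fin r), a' j k ^ 2 ≤ 1 := by
    intro j k
    by_cases h : j < p
    · rw [ha'lt j h k]; exact hα1 _ k
    · simp [ha', dif_neg h]
  have hb'sq : ∀ (j : ℕ) (k : Fin r), b' j k ^ 2 ≤ 1 := by
    intro j k
    by_cases h : j < p
    · rw [hb'lt j h k]; exact hβ1 _ k
    · simp [hb', dif_neg h]
  have hfa : ∀ k, (∏ q : Fin p, α q k) = ∏ j ∈ Finset.range p, a' j k := by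
    intro k
    rw [← Fin.prod_univ_eq_prod_range (fun j => a' j k) p]
    refine Finset.prod_congr rfl fun i _ => ?_
    rw [ha'lt i.1 i.2 k]
  have hfb : ∀ k, (∏ q : Fin p, β q k) = ∏ j ∈ Finset.range p, b' j k := by
    intro k
    rw [← Fin.prod_univ_eq_prod_range (fun j => b' j k) p]
    refine Finset.prod_congr rfl fun i _ => ?_
    rw [hb'lt i.1 i.2 k]
  -- value of the pairing
  have hXe : X = fun i => ∑ k, η k * ∏ q, A q (i q) k := funext hX
  have hTe : T = fun i => ∑ k, η k * ∏ q, U q (i q) k := funext hT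
  have hval : tInner (fun i => X i - T i) x
      = ∑ k, η k * ((∏ q : Fin p, α q k) - ∏ q : Fin p, β q k) := by
    have e1 : tInner (fun i => X i - T i) x = tInner X x - tInner T x := by
      unfold tInner
      rw [← Finset.sum_sub_distrib]
      exact Finset.sum_congr rfl fun i _ => by ring
    rw [e1, hXe, hTe, tInner_rank_one, tInner_rank_one, ← Finset.sum_sub_distrib]
    refine Finset.sum_congr rfl fun k _ => ?_
    rw [← mul_sub]
  have hstep : tInner (fun i => X i - T i) x
      = ∑ q ∈ Finset.range p, ∑ k, η k *
          ((a' q k - b' q k) *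
            ((∏ j ∈ Finset.range q, b' j k) * ∏ j ∈ Finset.Ico (q + 1) p, a' j k)) := by
    rw [hval]
    calc ∑ k, η k * ((∏ q : Fin p, α q k) - ∏ q : Fin p, β q k)
        = ∑ k, ∑ q ∈ Finset.range p, η k * ((a' q k - b' q k) *
            ((∏ j ∈ Finset.range q, b' j k) * ∏ j ∈ Finset.Ico (q + 1) p, a' j k)) := by
          refine Finset.sum_congr rfl fun k _ => ?_
          rw [hfa k, hfb k, telescope p (fun j => a' j k) (fun j => b' j k), Finset.mul_sum]
      _ = _ := Finset.sum_comm
  -- per-mode bounds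
  have hq_bound : ∀ q ∈ Finset.range p,
      |∑ k, η k * ((a' q k - b' q k) *
        ((∏ j ∈ Finset.range q, b' j k) * ∏ j ∈ Finset.Ico (q + 1) p, a' j k))|
        ≤ η ⟨0, hr⟩ * (δ * (if q = 0 then 1 + δ else 1)) := by
    intro q hq
    have hqp : q < p := Finset.mem_range.1 hq
    have hCd : (0:ℝ) ≤ if q = 0 then 1 + δ else 1 := by
      split <;> linarith
    refine weighted_cs η (fun k => a' q k - b' q k)
      (fun k => (∏ j ∈ Finset.range q, b' j k) * ∏ j ∈ Finset.Ico (q + 1) p, a' j k)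
      (η ⟨0, hr⟩) δ (if q = 0 then 1 + δ else 1) hη0.le
      (fun k => ⟨(hpos k).le, hmono ⟨0, hr⟩ k (by simp [Fin.le_def])⟩) hδ0 hCd ?_ ?_
    · -- ∑ (a' - b')² ≤ δ²
      have e : ∀ k, a' q k - b' q k = ((A ⟨q, hqp⟩)ᵀ *ᵥ x ⟨q, hqp⟩
          - (U ⟨q, hqp⟩)ᵀ *ᵥ x ⟨q, hqp⟩) k := by
        intro k
        rw [ha'lt q hqp k, hb'lt q hqp k, Pi.sub_apply, ← hαvec, ← hβvec]
      calc ∑ k, (a' q k - b' q k) ^ 2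
          = nsq ((A ⟨q, hqp⟩)ᵀ *ᵥ x ⟨q, hqp⟩ - (U ⟨q, hqp⟩)ᵀ *ᵥ x ⟨q, hqp⟩) :=
            Finset.sum_congr rfl fun k _ => by rw [e k]
        _ ≤ δ ^ 2 * nsq (x ⟨q, hqp⟩) := hDtr _ _
        _ = δ ^ 2 := by rw [hx1, mul_one]
    · -- ∑ d² ≤ Cd²
      by_cases hq0 : q = 0
      · subst hq0
        simp only [if_pos rfl]
        have h1p : (1:ℕ) < p := by omega
        have hd2 : ∀ k, ((∏ j ∈ Finset.range 0, b' j k) *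
            ∏ j ∈ Finset.Ico (0 + 1) p, a' j k) ^ 2 ≤ (a' 1 k) ^ 2 := by
          intro k
          rw [Finset.range_zero, Finset.prod_empty, one_mul]
          exact prod_sq_le_single (Finset.mem_Ico.2 ⟨le_refl 1, h1p⟩) _
            (fun j _ => ha'sq j k)
        calc ∑ k, ((∏ j ∈ Finset.range 0, b' j k) * ∏ j ∈ Finset.Ico (0 + 1) p, a' j k) ^ 2
            ≤ ∑ k, (a' 1 k) ^ 2 := Finset.sum_le_sum fun k _ => hd2 k
          _ = nsq ((A ⟨1, h1p⟩)ᵀ *ᵥ x ⟨1, h1p⟩) := by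
              refine Finset.sum_congr rfl fun k _ => ?_
              rw [ha'lt 1 h1p k, ← hαvec]
          _ ≤ (1 + δ) ^ 2 * nsq (x ⟨1, h1p⟩) := hAtr _ _
          _ = (1 + δ) ^ 2 := by rw [hx1, mul_one]
      · simp only [if_neg hq0]
        have h0q : 0 < q := Nat.pos_of_ne_zero hq0
        have h0p : (0:ℕ) < p := by omega
        have hd2 : ∀ k, ((∏ j ∈ Finset.range q, b' j k) *
            ∏ j ∈ Finset.Ico (q + 1) p, a' j k) ^ 2 ≤ (b' 0 k) ^ 2 := by
          intro k
          have hh1 : (∏ j ∈ Finset.range q, b' j k) ^ 2 ≤ (b' 0 k) ^ 2 :=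
            prod_sq_le_single (Finset.mem_range.2 h0q) _ (fun j _ => hb'sq j k)
          have hh2 : (∏ j ∈ Finset.Ico (q + 1) p, a' j k) ^ 2 ≤ 1 := by
            rw [← Finset.prod_pow]
            exact Finset.prod_le_one (fun j _ => sq_nonneg _) fun j _ => ha'sq j k
          calc ((∏ j ∈ Finset.range q, b' j k) * ∏ j ∈ Finset.Ico (q + 1) p, a' j k) ^ 2
              = (∏ j ∈ Finset.range q, b' j k) ^ 2 *
                (∏ j ∈ Finset.Ico (q + 1) p, a' j k) ^ 2 := by ring
            _ ≤ (b' 0 k) ^ 2 * 1 := mul_le_mul hh1 hh2 (sq_nonneg _) (sq_nonneg _)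
            _ = (b' 0 k) ^ 2 := mul_one _
        calc ∑ k, ((∏ j ∈ Finset.range q, b' j k) * ∏ j ∈ Finset.Ico (q + 1) p, a' j k) ^ 2
            ≤ ∑ k, (b' 0 k) ^ 2 := Finset.sum_le_sum fun k _ => hd2 k
          _ = nsq ((U ⟨0, h0p⟩)ᵀ *ᵥ x ⟨0, h0p⟩) := by
              refine Finset.sum_congr rfl fun k _ => ?_
              rw [hb'lt 0 h0p k, ← hβvec]
          _ ≤ nsq (x ⟨0, h0p⟩) := hUtr _ _
          _ = 1 ^ 2 := by rw [hx1]; norm_num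
  -- assemble
  have h0mem : (0:ℕ) ∈ Finset.range p := Finset.mem_range.2 (by omega)
  calc tInner (fun i => X i - T i) x ≤ |tInner (fun i => X i - T i) x| := le_abs_self _
    _ = |∑ q ∈ Finset.range p, ∑ k, η k * ((a' q k - b' q k) *
          ((∏ j ∈ Finset.range q, b' j k) * ∏ j ∈ Finset.Ico (q + 1) p, a' j k))| := by
        rw [hstep]
    _ ≤ ∑ q ∈ Finset.range p, |∑ k, η k * ((a' q k - b' q k) *
          ((∏ j ∈ Finset.range q, b' j k) * ∏ j ∈ Finset.Ico (q + 1) p, a' j k))| :=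
        Finset.abs_sum_le_sum_abs _ _
    _ ≤ ∑ q ∈ Finset.range p, η ⟨0, hr⟩ * (δ * (if q = 0 then 1 + δ else 1)) :=
        Finset.sum_le_sum hq_bound
    _ = ∑ q ∈ Finset.range p, (η ⟨0, hr⟩ * δ
          + if q = 0 then η ⟨0, hr⟩ * δ * δ else 0) := by
        refine Finset.sum_congr rfl fun q _ => ?_
        by_cases h : q = 0 <;> simp [h] <;> ring
    _ = p * (η ⟨0, hr⟩ * δ) + η ⟨0, hr⟩ * δ * δ := by
        rw [Finset.sum_add_distrib, Finset.sum_const, Finset.card_range,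
          Finset.sum_ite_eq' (Finset.range p) 0 (fun _ => η ⟨0, hr⟩ * δ * δ), if_pos h0mem,
          nsmul_eq_mul]
    _ ≤ (p + 1) * δ * η ⟨0, hr⟩ := by
        nlinarith [mul_nonneg (mul_nonneg hδ0 hη0.le) (by linarith : (0:ℝ) ≤ 1 - δ)]
end

section
/- Let $\mathscr{T}=\sum_{k=1}^d\lambda_k u_k^{(1)}\otimes\cdots\otimes u_k^{(p)}$ be odeco ($p\ge 3$) and let $(a^{(1)},\ldots,a^{(p)})$ be a critical point of $F(a^{(1)},\ldots,a^{(p)})=\langle\mathscr{T},a^{(1)}\otimes\cdots\otimes a^{(p)}\rangle$ on the product of unit spheres with Lagrange multiplier $\lambda>0$, i.e., $\mathscr{T}\times_{q'\ne q}a^{(q')}=\lambda a^{(q)}$ for all $q$. If the set $S=\{k:\lambda_k\prod_q\langle u_k^{(q)},a^{(q)}\rangle\ne 0\}$ has at least two elements, then $(a^{(1)},\ldots,a^{(p)})$ is not a local maximum of $F$. -/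
open Finset Real

/-- Contraction of a `p`-th order tensor against the vectors `v j` in every mode `j ≠ q`. -/
noncomputable def contractExcept {p d : ℕ} (T : (Fin p → Fin d) → ℝ)
    (v : Fin p → Fin d → ℝ) (q : Fin p) (m : Fin d) : ℝ :=
  ∑ i : Fin p → Fin d,
    if i q = m then T i * ∏ j ∈ Finset.univ.erase q, v j (i j) else 0

lemma rankOne {p d : ℕ} (lams : Fin d → ℝ) (u : Fin p → Fin d → Fin d → ℝ)
    (T : (Fin p → Fin d) → ℝ)
    (hT : ∀ i, T i = ∑ k, lams k * ∏ q, u q k (i q))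
    (x : Fin p → Fin d → ℝ) :
    tInner T x = ∑ k, lams k * ∏ q, (∑ m, u q k m * x q m) := by
  unfold tInner
  simp only [hT, Finset.sum_mul]
  rw [Finset.sum_comm]
  refine Finset.sum_congr rfl fun k _ => ?_
  rw [Finset.prod_univ_sum, Fintype.piFinset_univ, Finset.mul_sum]
  refine Finset.sum_congr rfl fun i _ => ?_
  rw [mul_assoc, ← Finset.prod_mul_distrib]

lemma contractPair {p d : ℕ} (T : (Fin p → Fin d) → ℝ)
    (v : Fin p → Fin d → ℝ) (q : Fin p) (w : Fin d → ℝ) :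
    ∑ m, w m * contractExcept T v q m = tInner T (Function.update v q w) := by
  unfold contractExcept tInner
  simp only [Finset.mul_sum]
  rw [Finset.sum_comm]
  refine Finset.sum_congr rfl fun i _ => ?_
  have h1 : ∏ j ∈ univ.erase q, Function.update v q w j (i j)
      = ∏ j ∈ univ.erase q, v j (i j) :=
    Finset.prod_congr rfl fun j hj => by
      rw [Function.update_of_ne (Finset.ne_of_mem_erase hj)]
  rw [← Finset.mul_prod_erase univ _ (Finset.mem_univ q), Function.update_self, h1]
  have : ∀ m, w m * (if i q = m then T i * ∏ j ∈ univ.erase q, v j (i j) else 0)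
      = if i q = m then w m * (T i * ∏ j ∈ univ.erase q, v j (i j)) else 0 := by
    intro m; split <;> simp
  simp only [this, Finset.sum_ite_eq _ (i q), Finset.mem_univ, if_true]
  ring

lemma sum_dot {d : ℕ} (w f g h : Fin d → ℝ) (x y : ℝ) :
    ∑ m, w m * (f m + x * g m + y * h m)
      = (∑ m, w m * f m) + x * (∑ m, w m * g m) + y * (∑ m, w m * h m) := by
  simp only [Finset.mul_sum, ← Finset.sum_add_distrib]
  exact Finset.sum_congr rfl fun m _ => by ring

lemma sum_sq_expand {d : ℕ} (f g h : Fin d → ℝ) (x y : ℝ) :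
    ∑ m, (f m + x * g m + y * h m) ^ 2
      = (∑ m, f m ^ 2) + x ^ 2 * (∑ m, g m * g m) + y ^ 2 * (∑ m, h m * h m)
        + 2 * x * (∑ m, g m * f m) + 2 * y * (∑ m, h m * f m)
        + 2 * (x * y) * (∑ m, g m * h m) := by
  simp only [Finset.mul_sum, ← Finset.sum_add_distrib]
  exact Finset.sum_congr rfl fun m _ => by ring

lemma sum_sq_expand2 {d : ℕ} (g h : Fin d → ℝ) (x y : ℝ) :
    ∑ m, (x * g m + y * h m) ^ 2
      = x ^ 2 * (∑ m, g m * g m) + y ^ 2 * (∑ m, h m * h m)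
        + 2 * (x * y) * (∑ m, g m * h m) := by
  simp only [Finset.mul_sum, ← Finset.sum_add_distrib]
  exact Finset.sum_congr rfl fun m _ => by ring

lemma aux_mu {s' μ : ℝ} (h2 : μ ^ 2 = 1 + s') (h0 : 0 ≤ μ) (hs : 0 ≤ s') :
    1 ≤ μ ∧ (μ - 1) ^ 2 ≤ s' := by
  have h1 : 1 ≤ μ := by nlinarith
  exact ⟨h1, by nlinarith⟩

lemma aux_nu {s ν : ℝ} (h2 : ν ^ 2 = 1 - s) (h0 : 0 ≤ ν) (hs : 0 ≤ s) (hs1 : s ≤ 1) :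
    ν ≤ 1 ∧ (ν - 1) ^ 2 ≤ s := by
  have h1 : ν ≤ 1 := by nlinarith
  refine ⟨h1, ?_⟩
  nlinarith [mul_nonneg h0 (by linarith : (0:ℝ) ≤ 1 - ν)]

lemma sqrt_pow_eq_rpow {s : ℝ} (hs : 0 ≤ 1 + s) (p : ℕ) :
    Real.sqrt (1 + s) ^ p = (1 + s) ^ ((p : ℝ) / 2) := by
  rw [Real.sqrt_eq_rpow, ← Real.rpow_natCast ((1 + s) ^ (1/2 : ℝ)) p,
    ← Real.rpow_mul hs]
  congr 1
  ring

lemma bernoulli_lt {s : ℝ} (hs1 : -1 ≤ s) (hs0 : s ≠ 0) {p : ℕ} (hp : 3 ≤ p) :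
    1 + ((p : ℝ) / 2) * s < Real.sqrt (1 + s) ^ p := by
  rw [sqrt_pow_eq_rpow (by linarith)]
  refine one_add_mul_self_lt_rpow_one_add hs1 hs0 ?_
  have : (3 : ℝ) ≤ (p : ℝ) := by exact_mod_cast hp
  linarith


/-- Let `T = ∑_k λ_k u_k^{(1)} ⊗ ⋯ ⊗ u_k^{(p)}` be odeco (`p ≥ 3`) and let
`(a^{(1)},…,a^{(p)})` be a critical point of `F = ⟨T, a^{(1)} ⊗ ⋯ ⊗ a^{(p)}⟩` on the product
of unit spheres with Lagrange multiplier `λ > 0`. If the set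
`S = {k : λ_k ∏_q ⟨u_k^{(q)}, a^{(q)}⟩ ≠ 0}` has at least two elements, then
`(a^{(1)},…,a^{(p)})` is not a local maximum of `F`: arbitrarily close feasible points have a
strictly larger value of `F`. -/
theorem stmt12 (p d : ℕ) (hp : 3 ≤ p)
    (lams : Fin d → ℝ) (hlams : ∀ k, 0 ≤ lams k)
    (u : Fin p → Fin d → Fin d → ℝ)
    (hu : ∀ q k l, (∑ j, u q k j * u q l j) = if k = l then 1 else 0)
    (T : (Fin p → Fin d) → ℝ)
    (hT : ∀ i, T i = ∑ k, lams k * ∏ q, u q k (i q))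
    (a : Fin p → Fin d → ℝ) (haunit : ∀ q, ∑ m, a q m ^ 2 = 1)
    (lam : ℝ) (hlam : 0 < lam)
    (hcrit : ∀ q m, contractExcept T a q m = lam * a q m)
    (hS : ∃ k l : Fin d, k ≠ l ∧
      lams k * ∏ q, (∑ m, u q k m * a q m) ≠ 0 ∧
      lams l * ∏ q, (∑ m, u q l m * a q m) ≠ 0) :
    ∀ ε > (0 : ℝ), ∃ b : Fin p → Fin d → ℝ,
      (∀ q, ∑ m, b q m ^ 2 = 1) ∧
      (∀ q, ∑ m, (b q m - a q m) ^ 2 < ε) ∧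
      tInner T a < tInner T b := by
  intro ε hε
  obtain ⟨k0, l0, hkl, hk0, hl0⟩ := hS
  obtain ⟨c, hc⟩ : ∃ c : Fin p → Fin d → ℝ,
      ∀ q k, c q k = ∑ m, u q k m * a q m := ⟨_, fun _ _ => rfl⟩
  simp only [← hc] at hk0 hl0
  -- criticality in coefficient form
  have hcritc : ∀ (q : Fin p) (k : Fin d),
      lams k * ∏ j ∈ univ.erase q, c j k = lam * c q k := by
    intro q k
    have h1 : ∑ m, u q k m * contractExcept T a q m = lam * c q k := by
      simp only [hcrit, hc, Finset.mul_sum]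
      exact Finset.sum_congr rfl fun m _ => by ring
    rw [contractPair, rankOne lams u T hT] at h1
    rw [← h1]
    rw [Finset.sum_eq_single k]
    · have hq : (∑ m, u q k m * Function.update a q (u q k) q m) = 1 := by
        rw [Function.update_self, hu q k k]; simp
      rw [← Finset.mul_prod_erase univ _ (Finset.mem_univ q), hq, one_mul]
      congr 1
      refine Finset.prod_congr rfl fun j hj => ?_
      rw [Function.update_of_ne (Finset.ne_of_mem_erase hj), ← hc]
    · intro l _ hlk
      have hq : (∑ m, u q l m * Function.update a q (u q k) q m) = 0 := by
        rw [Function.update_self, hu q l k, if_neg hlk]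
      rw [Finset.prod_eq_zero (Finset.mem_univ q) hq, mul_zero]
    · intro h; exact absurd (Finset.mem_univ k) h
  have hsq : ∀ (q : Fin p) (k : Fin d),
      lam * c q k ^ 2 = lams k * ∏ j, c j k := by
    intro q k
    have h1 := hcritc q k
    have h2 := Finset.mul_prod_erase univ (fun j => c j k) (Finset.mem_univ q)
    calc lam * c q k ^ 2 = (lam * c q k) * c q k := by ring
      _ = (lams k * ∏ j ∈ univ.erase q, c j k) * c q k := by rw [h1]
      _ = lams k * (c q k * ∏ j ∈ univ.erase q, c j k) := by ring
      _ = lams k * ∏ j, c j k := by rw [h2]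
  -- invariant squares
  obtain ⟨tk, htkdef⟩ : ∃ t : ℝ, t = (lams k0 * ∏ j, c j k0) / lam := ⟨_, rfl⟩
  obtain ⟨tl, htldef⟩ : ∃ t : ℝ, t = (lams l0 * ∏ j, c j l0) / lam := ⟨_, rfl⟩
  have hPk : lams k0 * ∏ j, c j k0 = lam * tk := by
    rw [htkdef]; field_simp
  have hPl : lams l0 * ∏ j, c j l0 = lam * tl := by
    rw [htldef]; field_simp
  have htk : ∀ q, c q k0 ^ 2 = tk := by
    intro q
    have h1 := hsq q k0
    rw [hPk] at h1
    exact mul_left_cancel₀ (ne_of_gt hlam) h1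
  have htl : ∀ q, c q l0 ^ 2 = tl := by
    intro q
    have h1 := hsq q l0
    rw [hPl] at h1
    exact mul_left_cancel₀ (ne_of_gt hlam) h1
  have q0 : Fin p := ⟨0, by omega⟩
  have htkpos : 0 < tk := by
    have h1 : tk ≠ 0 := by
      rw [htkdef]; exact div_ne_zero hk0 (ne_of_gt hlam)
    have h2 : 0 ≤ tk := (htk q0) ▸ sq_nonneg _
    exact lt_of_le_of_ne h2 (Ne.symm h1)
  have htlpos : 0 < tl := by
    have h1 : tl ≠ 0 := by
      rw [htldef]; exact div_ne_zero hl0 (ne_of_gt hlam)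
    have h2 : 0 ≤ tl := (htl q0) ▸ sq_nonneg _
    exact lt_of_le_of_ne h2 (Ne.symm h1)
  -- perturbation size
  obtain ⟨δ, hδdef⟩ : ∃ t : ℝ, t = min tl (ε / 2) / 2 := ⟨_, rfl⟩
  have hδpos : 0 < δ := by rw [hδdef]; positivity
  have hδtl : δ ≤ tl / 2 := by
    rw [hδdef]; have := min_le_left tl (ε/2); linarith
  have hδε : 2 * δ < ε := by
    rw [hδdef]; have := min_le_right tl (ε/2); linarith
  obtain ⟨s', hs'def⟩ : ∃ t : ℝ, t = δ / tk := ⟨_, rfl⟩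
  obtain ⟨s, hsdef⟩ : ∃ t : ℝ, t = δ / tl := ⟨_, rfl⟩
  have hs'pos : 0 < s' := by rw [hs'def]; positivity
  have hspos : 0 < s := by rw [hsdef]; positivity
  have hs2 : s ≤ 1 / 2 := by
    rw [hsdef, div_le_iff₀ htlpos]; linarith
  have e5 : s' * tk = δ := by
    rw [hs'def]; field_simp
  have e6 : s * tl = δ := by
    rw [hsdef]; field_simp
  obtain ⟨μ, hμdef⟩ : ∃ t : ℝ, t = Real.sqrt (1 + s') := ⟨_, rfl⟩
  obtain ⟨ν, hνdef⟩ : ∃ t : ℝ, t = Real.sqrt (1 - s) := ⟨_, rfl⟩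
  have hμ2 : μ ^ 2 = 1 + s' := by
    rw [hμdef]; exact Real.sq_sqrt (by linarith)
  have hν2 : ν ^ 2 = 1 - s := by
    rw [hνdef]
    have : (1 : ℝ) - s = 1 + (-s) := by ring
    exact Real.sq_sqrt (by linarith)
  have hμ0 : 0 ≤ μ := hμdef ▸ Real.sqrt_nonneg _
  have hν0 : 0 ≤ ν := hνdef ▸ Real.sqrt_nonneg _
  obtain ⟨hμ1, hμsq⟩ := aux_mu hμ2 hμ0 (le_of_lt hs'pos)
  obtain ⟨hν1, hνsq⟩ := aux_nu hν2 hν0 (le_of_lt hspos) (by linarith)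
  -- the competitor
  refine ⟨fun q m => a q m + ((μ - 1) * c q k0) * u q k0 m + ((ν - 1) * c q l0) * u q l0 m,
    fun q => ?_, fun q => ?_, ?_⟩
  · -- unit norm
    show ∑ m, (a q m + ((μ - 1) * c q k0) * u q k0 m + ((ν - 1) * c q l0) * u q l0 m) ^ 2 = 1
    rw [sum_sq_expand, haunit q, hu q k0 k0, hu q l0 l0, hu q k0 l0, if_neg hkl,
      if_pos rfl, if_pos rfl, ← hc q k0, ← hc q l0]
    linear_combination ((μ - 1) ^ 2 + 2 * (μ - 1)) * (htk q)
      + ((ν - 1) ^ 2 + 2 * (ν - 1)) * (htl q) + tk * hμ2 + tl * hν2 + e5 - e6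
  · -- closeness
    show ∑ m, ((a q m + ((μ - 1) * c q k0) * u q k0 m + ((ν - 1) * c q l0) * u q l0 m)
        - a q m) ^ 2 < ε
    have hpt : ∀ m, (a q m + ((μ - 1) * c q k0) * u q k0 m + ((ν - 1) * c q l0) * u q l0 m)
        - a q m = ((μ - 1) * c q k0) * u q k0 m + ((ν - 1) * c q l0) * u q l0 m :=
      fun m => by ring
    simp only [hpt]
    rw [sum_sq_expand2, hu q k0 k0, hu q l0 l0, hu q k0 l0, if_neg hkl,
      if_pos rfl, if_pos rfl]
    have e3 : ((μ - 1) * c q k0) ^ 2 = (μ - 1) ^ 2 * tk := by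
      rw [← htk q]; ring
    have e4 : ((ν - 1) * c q l0) ^ 2 = (ν - 1) ^ 2 * tl := by
      rw [← htl q]; ring
    have b1 : (μ - 1) ^ 2 * tk ≤ δ := by
      calc (μ - 1) ^ 2 * tk ≤ s' * tk :=
            mul_le_mul_of_nonneg_right hμsq (le_of_lt htkpos)
        _ = δ := e5
    have b2 : (ν - 1) ^ 2 * tl ≤ δ := by
      calc (ν - 1) ^ 2 * tl ≤ s * tl :=
            mul_le_mul_of_nonneg_right hνsq (le_of_lt htlpos)
        _ = δ := e6
    rw [e3, e4]
    linarith
  · -- value increases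
    have hcb : ∀ (q : Fin p) (k : Fin d),
        (∑ m, u q k m * (a q m + ((μ - 1) * c q k0) * u q k0 m
            + ((ν - 1) * c q l0) * u q l0 m))
          = c q k + ((μ - 1) * c q k0) * (if k = k0 then 1 else 0)
            + ((ν - 1) * c q l0) * (if k = l0 then 1 else 0) := by
      intro q k
      rw [sum_dot, hu q k k0, hu q k l0, ← hc q k]
    rw [rankOne lams u T hT a, rankOne lams u T hT]
    simp only [hcb, ← hc]
    have hterm : ∀ k : Fin d,
        lams k * ∏ q, (c q k + ((μ - 1) * c q k0) * (if k = k0 then 1 else 0)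
            + ((ν - 1) * c q l0) * (if k = l0 then 1 else 0))
          - lams k * ∏ q, c q k
          = if k = k0 then lams k0 * ((μ ^ p - 1) * ∏ q, c q k0)
            else if k = l0 then lams l0 * ((ν ^ p - 1) * ∏ q, c q l0) else 0 := by
      intro k
      by_cases h1 : k = k0
      · subst h1
        have hfac : ∀ q ∈ (univ : Finset (Fin p)),
            c q k + ((μ - 1) * c q k) * (if k = k then (1:ℝ) else 0)
              + ((ν - 1) * c q l0) * (if k = l0 then 1 else 0) = μ * c q k := by
          intro q _; rw [if_pos rfl, if_neg hkl]; ring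
        rw [Finset.prod_congr rfl hfac, Finset.prod_mul_distrib,
          Finset.prod_const, Finset.card_univ, Fintype.card_fin, if_pos rfl]
        ring
      · by_cases h2 : k = l0
        · subst h2
          have hfac : ∀ q ∈ (univ : Finset (Fin p)),
              c q k + ((μ - 1) * c q k0) * (if k = k0 then (1:ℝ) else 0)
                + ((ν - 1) * c q k) * (if k = k then 1 else 0) = ν * c q k := by
            intro q _; rw [if_pos rfl, if_neg h1]; ring
          rw [Finset.prod_congr rfl hfac, Finset.prod_mul_distrib,
            Finset.prod_const, Finset.card_univ, Fintype.card_fin, if_neg h1, if_pos rfl]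
          ring
        · have hfac : ∀ q ∈ (univ : Finset (Fin p)),
              c q k + ((μ - 1) * c q k0) * (if k = k0 then (1:ℝ) else 0)
                + ((ν - 1) * c q l0) * (if k = l0 then 1 else 0) = c q k := by
            intro q _; rw [if_neg h1, if_neg h2]; ring
          rw [Finset.prod_congr rfl hfac, if_neg h1, if_neg h2]
          ring
    have hsum : (∑ k, lams k * ∏ q, (c q k + ((μ - 1) * c q k0) * (if k = k0 then 1 else 0)
            + ((ν - 1) * c q l0) * (if k = l0 then 1 else 0)))
          - (∑ k, lams k * ∏ q, c q k)
        = lams k0 * ((μ ^ p - 1) * ∏ q, c q k0)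
          + lams l0 * ((ν ^ p - 1) * ∏ q, c q l0) := by
      rw [← Finset.sum_sub_distrib]
      rw [Finset.sum_congr rfl (fun k _ => hterm k)]
      rw [Finset.sum_eq_add_of_mem k0 l0 (Finset.mem_univ _) (Finset.mem_univ _) hkl
        (fun k _ hk => by rw [if_neg hk.1, if_neg hk.2])]
      rw [if_pos rfl, if_neg (Ne.symm hkl), if_pos rfl]
    -- Bernoulli bounds
    have hburn1 : 1 + ((p : ℝ) / 2) * s' < μ ^ p := by
      rw [hμdef]
      exact bernoulli_lt (by linarith) (ne_of_gt hs'pos) hp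
    have hburn2 : 1 + ((p : ℝ) / 2) * (-s) < ν ^ p := by
      rw [hνdef]
      have h := bernoulli_lt (s := -s) (by linarith)
        (ne_of_lt (neg_lt_zero.mpr hspos)) hp
      rw [show (1 : ℝ) + -s = 1 - s from by ring] at h
      exact h
    have hdpos : 0 < lams k0 * ((μ ^ p - 1) * ∏ q, c q k0)
        + lams l0 * ((ν ^ p - 1) * ∏ q, c q l0) := by
      have r1 : lams k0 * ((μ ^ p - 1) * ∏ q, c q k0) = (μ ^ p - 1) * (lam * tk) := by
        rw [← hPk]; ring
      have r2 : lams l0 * ((ν ^ p - 1) * ∏ q, c q l0) = (ν ^ p - 1) * (lam * tl) := by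
        rw [← hPl]; ring
      rw [r1, r2]
      have h1 : ((p : ℝ) / 2) * δ < tk * (μ ^ p - 1) := by
        have := mul_lt_mul_of_pos_left (by linarith : ((p : ℝ) / 2) * s' < μ ^ p - 1) htkpos
        calc ((p : ℝ) / 2) * δ = tk * (((p : ℝ) / 2) * s') := by
              rw [← e5]; ring
          _ < tk * (μ ^ p - 1) := this
      have h2 : -(((p : ℝ) / 2) * δ) < tl * (ν ^ p - 1) := by
        have := mul_lt_mul_of_pos_left (by linarith : ((p : ℝ) / 2) * (-s) < ν ^ p - 1) htlpos
        calc -(((p : ℝ) / 2) * δ) = tl * (((p : ℝ) / 2) * (-s)) := by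
              rw [← e6]; ring
          _ < tl * (ν ^ p - 1) := this
      nlinarith [hlam]
    linarith [hsum, hdpos]
end

section
/- Let $\mathscr{T}$ be an odeco tensor with decomposition $\mathscr{T}=\sum_{k=1}^d\lambda_k u_k^{(1)}\otimes\cdots\otimes u_k^{(p)}$, $p\ge 3$, $\lambda_k>0$ for all $k$. Then for every $k$, the tuple $(u_k^{(1)},\ldots,u_k^{(p)})$ is a local maximum of $F(a^{(1)},\ldots,a^{(p)})=|\langle\mathscr{T},a^{(1)}\otimes\cdots\otimes a^{(p)}\rangle|$ over $S^{d_1-1}\times\cdots\times S^{d_p-1}$. -/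
open Finset Real

private lemma bessel_aux {n r : ℕ} (u : Fin r → Fin n → ℝ)
    (hu : ∀ k l, (∑ j, u k j * u l j) = if k = l then 1 else 0)
    (b : Fin n → ℝ) (hb : ∑ j, b j ^ 2 = 1) :
    ∑ l, (∑ j, u l j * b j) ^ 2 ≤ 1 := by
  classical
  set c : Fin r → ℝ := fun l => ∑ j, u l j * b j with hc
  have key : (0:ℝ) ≤ ∑ j, (b j - ∑ l, c l * u l j) ^ 2 :=
    Finset.sum_nonneg fun j _ => sq_nonneg _
  have h2 : ∑ j, b j * ∑ l, c l * u l j = ∑ l, c l ^ 2 := by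
    simp_rw [Finset.mul_sum]
    rw [Finset.sum_comm]
    refine Finset.sum_congr rfl fun l _ => ?_
    have : ∑ j, b j * (c l * u l j) = c l * ∑ j, u l j * b j := by
      rw [Finset.mul_sum]; exact Finset.sum_congr rfl fun j _ => by ring
    rw [this]; rw [show (∑ j, u l j * b j) = c l from rfl]; ring
  have h3 : ∑ j, (∑ l, c l * u l j) ^ 2 = ∑ l, c l ^ 2 := by
    simp_rw [sq, Finset.sum_mul_sum]
    rw [Finset.sum_comm]
    refine Finset.sum_congr rfl fun l _ => ?_
    rw [Finset.sum_comm]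
    have : ∀ m : Fin r, ∑ j, (c l * u l j) * (c m * u m j)
        = c l * c m * (if l = m then (1:ℝ) else 0) := by
      intro m
      rw [← hu l m, Finset.mul_sum]
      exact Finset.sum_congr rfl fun j _ => by ring
    simp_rw [this]
    simp [mul_ite]
  have expand : ∑ j, (b j - ∑ l, c l * u l j) ^ 2 = 1 - ∑ l, c l ^ 2 := by
    have h1 : ∀ j, (b j - ∑ l, c l * u l j) ^ 2
        = b j ^ 2 - 2 * (b j * ∑ l, c l * u l j) + (∑ l, c l * u l j) ^ 2 := by
      intro j; ring
    simp_rw [h1, Finset.sum_add_distrib, Finset.sum_sub_distrib, ← Finset.mul_sum, hb, h2, h3]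
    ring
  linarith [expand ▸ key]

private lemma prod_le_three {p : ℕ} (q0 q1 q2 : Fin p) (h01 : q0 ≠ q1) (h02 : q0 ≠ q2)
    (h12 : q1 ≠ q2) (x : Fin p → ℝ) (hx0 : ∀ q, 0 ≤ x q) (hx1 : ∀ q, x q ≤ 1) :
    ∏ q, x q ≤ x q0 * x q1 * x q2 := by
  classical
  have hsub : ({q0, q1, q2} : Finset (Fin p)) ⊆ Finset.univ := Finset.subset_univ _
  rw [← Finset.prod_sdiff hsub]
  have h1 : ∏ q ∈ Finset.univ \ {q0, q1, q2}, x q ≤ 1 :=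
    Finset.prod_le_one (fun q _ => hx0 q) (fun q _ => hx1 q)
  have h2 : ∏ q ∈ ({q0, q1, q2} : Finset (Fin p)), x q = x q0 * x q1 * x q2 := by
    rw [Finset.prod_insert (by simp [h01, h02]), Finset.prod_insert (by simp [h12]),
      Finset.prod_singleton, mul_assoc]
  rw [h2]
  have h3 : (0:ℝ) ≤ x q0 * x q1 * x q2 :=
    mul_nonneg (mul_nonneg (hx0 q0) (hx0 q1)) (hx0 q2)
  calc (∏ q ∈ Finset.univ \ {q0, q1, q2}, x q) * (x q0 * x q1 * x q2)
      ≤ 1 * (x q0 * x q1 * x q2) := mul_le_mul_of_nonneg_right h1 h3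
    _ = x q0 * x q1 * x q2 := one_mul _

/-- Let `T = ∑_{k=1}^r λ_k u_k^{(1)} ⊗ ⋯ ⊗ u_k^{(p)}` be an odeco tensor (`p ≥ 3`, `λ_k > 0`
for all `k`, orthonormal modes). Then for every `k`, the tuple `(u_k^{(1)},…,u_k^{(p)})` is a
local maximum of `F(a^{(1)},…,a^{(p)}) = |⟨T, a^{(1)} ⊗ ⋯ ⊗ a^{(p)}⟩|` over
`S^{d_1-1} × ⋯ × S^{d_p-1}`. -/
theorem stmt13 (p r : ℕ) (hp : 3 ≤ p) (d : Fin p → ℕ)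
    (lam : Fin r → ℝ) (hlam : ∀ k, 0 < lam k)
    (u : (q : Fin p) → Fin r → Fin (d q) → ℝ)
    (hu : ∀ q k l, (∑ j, u q k j * u q l j) = if k = l then 1 else 0)
    (T : ((q : Fin p) → Fin (d q)) → ℝ)
    (hT : ∀ i, T i = ∑ k, lam k * ∏ q, u q k (i q))
    (k : Fin r) :
    ∃ ε > (0 : ℝ), ∀ b : (q : Fin p) → Fin (d q) → ℝ,
      (∀ q, ∑ j, b q j ^ 2 = 1) →
      (∀ q, ∑ j, (b q j - u q k j) ^ 2 < ε) →
      |∑ i : (q : Fin p) → Fin (d q), T i * ∏ q, b q (i q)| ≤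
        |∑ i : (q : Fin p) → Fin (d q), T i * ∏ q, u q k (i q)| := by
  classical
  set S : ℝ := ∑ l, lam l with hS
  have hS0 : 0 < S := Finset.sum_pos (fun l _ => hlam l) ⟨k, Finset.mem_univ k⟩
  set δ : ℝ := lam k / (1 + S) with hδ
  have hδ0 : 0 < δ := div_pos (hlam k) (by linarith)
  have key : ∀ a : (q : Fin p) → Fin (d q) → ℝ,
      (∑ i : (q : Fin p) → Fin (d q), T i * ∏ q, a q (i q))
        = ∑ l, lam l * ∏ q, ∑ j, u q l j * a q j := by
    intro a
    simp_rw [hT, Finset.sum_mul]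
    rw [Finset.sum_comm]
    refine Finset.sum_congr rfl fun l _ => ?_
    rw [Fintype.prod_sum, Finset.mul_sum]
    refine Finset.sum_congr rfl fun i _ => ?_
    rw [Finset.prod_mul_distrib]
    ring
  have hval : |∑ i : (q : Fin p) → Fin (d q), T i * ∏ q, u q k (i q)| = lam k := by
    rw [key (fun q => u q k)]
    have h1 : ∀ l : Fin r, (∏ q, ∑ j, u q l j * u q k j) = if l = k then (1:ℝ) else 0 := by
      intro l
      simp_rw [hu]
      by_cases h : l = k
      · simp [h]
      · simp only [h, if_false]
        rw [Finset.prod_const, Finset.card_univ, Fintype.card_fin]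
        exact zero_pow (by omega)
    simp_rw [h1, mul_ite, mul_one, mul_zero]
    rw [Finset.sum_ite_eq' Finset.univ k lam, if_pos (Finset.mem_univ k)]
    exact abs_of_pos (hlam k)
  refine ⟨δ ^ 2, by positivity, ?_⟩
  intro b hb hclose
  rw [key b, hval]
  set c : Fin p → Fin r → ℝ := fun q l => ∑ j, u q l j * b q j with hc
  have habs1 : ∀ q l, |c q l| ≤ 1 := by
    intro q l
    have hCS := Finset.sum_mul_sq_le_sq_mul_sq Finset.univ (u q l) (b q)
    have hul : ∑ j, (u q l j) ^ 2 = 1 := by simpa [sq] using hu q l l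
    rw [hul, hb q, one_mul] at hCS
    nlinarith [abs_nonneg (c q l), sq_abs (c q l)]
  have hsmall : ∀ q l, l ≠ k → |c q l| ≤ δ := by
    intro q l hlk
    have hortho : c q l = ∑ j, u q l j * (b q j - u q k j) := by
      simp_rw [mul_sub, Finset.sum_sub_distrib]
      rw [hu q l k, if_neg hlk, sub_zero]
    have hul : ∑ j, (u q l j) ^ 2 = 1 := by simpa [sq] using hu q l l
    have hCS := Finset.sum_mul_sq_le_sq_mul_sq Finset.univ (u q l)
      (fun j => b q j - u q k j)
    rw [hul, one_mul] at hCS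
    have h1 : (c q l) ^ 2 ≤ δ ^ 2 := by
      rw [hortho]
      exact hCS.trans (le_of_lt (hclose q))
    nlinarith [abs_nonneg (c q l), sq_abs (c q l), hδ0]
  have hbes : ∀ q, ∑ l, (c q l) ^ 2 ≤ 1 := fun q => bessel_aux (u q) (hu q) (b q) (hb q)
  set q0 : Fin p := ⟨0, by omega⟩ with hq0
  set q1 : Fin p := ⟨1, by omega⟩ with hq1
  set q2 : Fin p := ⟨2, by omega⟩ with hq2
  have hne01 : q0 ≠ q1 := by simp [hq0, hq1, Fin.ext_iff]
  have hne02 : q0 ≠ q2 := by simp [hq0, hq2, Fin.ext_iff]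
  have hne12 : q1 ≠ q2 := by simp [hq1, hq2, Fin.ext_iff]
  have hperl : ∀ l : Fin r, lam l * |∏ q, c q l|
      ≤ lam k * (((c q0 l) ^ 2 + (c q1 l) ^ 2) / 2) := by
    intro l
    rw [Finset.abs_prod]
    have hPle : ∏ q, |c q l| ≤ |c q0 l| * |c q1 l| * |c q2 l| :=
      prod_le_three q0 q1 q2 hne01 hne02 hne12 _ (fun q => abs_nonneg _)
        (fun q => habs1 q l)
    have h01 : (0:ℝ) ≤ |c q0 l| * |c q1 l| := mul_nonneg (abs_nonneg _) (abs_nonneg _)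
    have step4 : |c q0 l| * |c q1 l| ≤ ((c q0 l) ^ 2 + (c q1 l) ^ 2) / 2 := by
      nlinarith [sq_nonneg (|c q0 l| - |c q1 l|), sq_abs (c q0 l), sq_abs (c q1 l)]
    by_cases hl : l = k
    · subst hl
      have ha2 : |c q2 l| ≤ 1 := habs1 q2 l
      have step1 : |c q0 l| * |c q1 l| * |c q2 l| ≤ |c q0 l| * |c q1 l| := by
        nlinarith [abs_nonneg (c q2 l)]
      have step3 : ∏ q, |c q l| ≤ ((c q0 l) ^ 2 + (c q1 l) ^ 2) / 2 :=
        le_trans hPle (step1.trans step4)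
      exact mul_le_mul_of_nonneg_left step3 (hlam l).le
    · have hd : |c q2 l| ≤ δ := hsmall q2 l hl
      have hlS : lam l ≤ S := Finset.single_le_sum (fun i _ => (hlam i).le) (Finset.mem_univ l)
      have hld : lam l * δ ≤ lam k := by
        rw [hδ, mul_div_assoc']
        rw [div_le_iff₀ (by linarith)]
        nlinarith [hlam k]
      have step1 : lam l * ∏ q, |c q l| ≤ lam l * (|c q0 l| * |c q1 l| * |c q2 l|) :=
        mul_le_mul_of_nonneg_left hPle (hlam l).le
      have step2 : lam l * (|c q0 l| * |c q1 l| * |c q2 l|)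
          ≤ (lam l * δ) * (|c q0 l| * |c q1 l|) := by
        nlinarith [mul_le_mul_of_nonneg_left hd (mul_nonneg (hlam l).le h01)]
      have step3 : (lam l * δ) * (|c q0 l| * |c q1 l|) ≤ lam k * (|c q0 l| * |c q1 l|) :=
        mul_le_mul_of_nonneg_right hld h01
      have step5 : lam k * (|c q0 l| * |c q1 l|)
          ≤ lam k * (((c q0 l) ^ 2 + (c q1 l) ^ 2) / 2) :=
        mul_le_mul_of_nonneg_left step4 (hlam k).le
      linarith
  have hsum : ∑ l, lam k * (((c q0 l) ^ 2 + (c q1 l) ^ 2) / 2)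
      = (lam k / 2) * (∑ l, (c q0 l) ^ 2) + (lam k / 2) * (∑ l, (c q1 l) ^ 2) := by
    rw [Finset.mul_sum, Finset.mul_sum, ← Finset.sum_add_distrib]
    exact Finset.sum_congr rfl fun l _ => by ring
  calc |∑ l, lam l * ∏ q, ∑ j, u q l j * b q j|
      ≤ ∑ l, |lam l * ∏ q, c q l| := Finset.abs_sum_le_sum_abs _ _
    _ = ∑ l, lam l * |∏ q, c q l| := by
        refine Finset.sum_congr rfl fun l _ => ?_
        rw [abs_mul, abs_of_pos (hlam l)]
    _ ≤ ∑ l, lam k * (((c q0 l) ^ 2 + (c q1 l) ^ 2) / 2) :=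
        Finset.sum_le_sum fun l _ => hperl l
    _ ≤ lam k := by
        rw [hsum]
        nlinarith [hbes q0, hbes q1, hlam k,
          Finset.sum_nonneg (fun l (_ : l ∈ Finset.univ) => sq_nonneg (c q0 l)),
          Finset.sum_nonneg (fun l (_ : l ∈ Finset.univ) => sq_nonneg (c q1 l))]
end

section
/- Let $\mathscr{T}=\sum_{k=1}^d\lambda_k u_k^{(1)}\otimes\cdots\otimes u_k^{(p)}$ and $\tilde{\mathscr{T}}=\sum_{k=1}^d\tilde\lambda_k\tilde u_k^{(1)}\otimes\cdots\otimes\tilde u_k^{(p)}$ be odeco with $p\ge 3$ and $\lambda_1\ge\cdots\ge\lambda_d\ge 0$. Then $\lambda_1\le\max_{1\le k\le d}\Big\{\tilde\lambda_k\prod_{q=1}^p|\langle u_1^{(q)},\tilde u_k^{(q)}\rangle|^{(p-2)/p}\Big\}+\|\tilde{\mathscr{T}}-\mathscr{T}\|$. -/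
open Finset Real

lemma tInner_decomp {p d : ℕ} (lam : Fin d → ℝ) (u : Fin p → Fin d → Fin d → ℝ)
    (T : (Fin p → Fin d) → ℝ) (hT : ∀ i, T i = ∑ k, lam k * ∏ q, u q k (i q))
    (x : Fin p → Fin d → ℝ) :
    tInner T x = ∑ k, lam k * ∏ q, (∑ j, u q k j * x q j) := by
  unfold tInner
  simp_rw [hT, Finset.sum_mul, mul_assoc, ← Finset.prod_mul_distrib]
  rw [Finset.sum_comm]
  simp_rw [← Finset.mul_sum]
  refine Finset.sum_congr rfl fun k _ => ?_
  congr 1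
  exact (Fintype.prod_sum fun q j => u q k j * x q j).symm

lemma tInner_le_specNorm {p d : ℕ} (S : (Fin p → Fin d) → ℝ)
    (x : Fin p → Fin d → ℝ) (hx : ∀ q, UnitVec (x q)) :
    tInner S x ≤ specNorm S := by
  apply le_csSup
  · refine ⟨∑ i, |S i|, ?_⟩
    rintro v ⟨y, hy, rfl⟩
    calc tInner S y ≤ |tInner S y| := le_abs_self _
    _ ≤ ∑ i, |S i * ∏ q, y q (i q)| := Finset.abs_sum_le_sum_abs _ _
    _ ≤ ∑ i, |S i| := by
        apply Finset.sum_le_sum; intro i _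
        rw [abs_mul]
        have h1 : |∏ q, y q (i q)| ≤ 1 := by
          rw [Finset.abs_prod]
          have hb : ∀ q : Fin p, |y q (i q)| ≤ 1 := by
            intro q
            have hyq : ∑ j, y q j ^ 2 = 1 := hy q
            have h2 : (y q (i q)) ^ 2 ≤ 1 := by
              rw [← hyq]
              exact Finset.single_le_sum (f := fun j => y q j ^ 2) (fun j _ => sq_nonneg _) (Finset.mem_univ (i q))
            exact (sq_le_one_iff_abs_le_one _).mp h2
          calc (∏ q, |y q (i q)|) ≤ ∏ q : Fin p, (1 : ℝ) :=
                Finset.prod_le_prod (fun q _ => abs_nonneg _) (fun q _ => hb q)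
          _ = 1 := Finset.prod_const_one
        calc |S i| * |∏ q, y q (i q)| ≤ |S i| * 1 :=
              mul_le_mul_of_nonneg_left h1 (abs_nonneg _)
        _ = |S i| := mul_one _
  · exact ⟨x, hx, rfl⟩

lemma neg_tInner_le_specNorm {p d : ℕ} (hp : 0 < p) (S : (Fin p → Fin d) → ℝ)
    (x : Fin p → Fin d → ℝ) (hx : ∀ q, UnitVec (x q)) :
    -(tInner S x) ≤ specNorm S := by
  set e : Fin p := ⟨0, hp⟩ with he
  set y : Fin p → Fin d → ℝ := fun q j => (if q = e then (-1 : ℝ) else 1) * x q j with hy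
  have hy_unit : ∀ q, UnitVec (y q) := by
    intro q
    unfold UnitVec
    simp only [hy, mul_pow]
    have h : ((if q = e then (-1 : ℝ) else 1)) ^ 2 = 1 := by split_ifs <;> norm_num
    simp_rw [h, one_mul]
    exact hx q
  have hval : tInner S y = -(tInner S x) := by
    unfold tInner
    rw [← Finset.sum_neg_distrib]
    refine Finset.sum_congr rfl fun i _ => ?_
    have h : (∏ q, y q (i q)) = -(∏ q, x q (i q)) := by
      simp only [hy]
      rw [Finset.prod_mul_distrib]
      have h2 : (∏ q : Fin p, (if q = e then (-1 : ℝ) else 1)) = -1 := by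
        rw [Finset.prod_ite_eq' Finset.univ e (fun _ => (-1 : ℝ))]
        simp
      rw [h2]; ring
    rw [h]; ring
  rw [← hval]
  exact tInner_le_specNorm S y hy_unit

lemma colsum {d : ℕ} (A : Fin d → Fin d → ℝ)
    (hA : ∀ k l, (∑ j, A k j * A l j) = if k = l then 1 else 0) (j j' : Fin d) :
    (∑ k, A k j * A k j') = if j = j' then 1 else 0 := by
  have h1 : Matrix.of A * Matrix.transpose (Matrix.of A) = 1 := by
    ext k l
    simp [Matrix.mul_apply, Matrix.transpose_apply, hA, Matrix.one_apply]
  have h2 := mul_eq_one_comm.mp h1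
  have h3 := congrFun (congrFun h2 j) j'
  simpa [Matrix.mul_apply, Matrix.transpose_apply, Matrix.one_apply] using h3

lemma sum_sq_inner {d : ℕ} (A : Fin d → Fin d → ℝ)
    (hA : ∀ k l, (∑ j, A k j * A l j) = if k = l then 1 else 0)
    (v : Fin d → ℝ) (hv : ∑ j, v j ^ 2 = 1) :
    ∑ k, (∑ j, v j * A k j) ^ 2 = 1 := by
  have step : ∀ k, (∑ j, v j * A k j) ^ 2 = ∑ j, ∑ j', (v j * v j') * (A k j * A k j') := by
    intro k
    rw [sq, Finset.sum_mul_sum]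
    refine Finset.sum_congr rfl fun j _ => Finset.sum_congr rfl fun j' _ => by ring
  simp_rw [step]
  rw [Finset.sum_comm]
  have : ∀ j, (∑ k, ∑ j', v j * v j' * (A k j * A k j')) = v j ^ 2 := by
    intro j
    rw [Finset.sum_comm]
    have h1 : ∀ j', (∑ k, v j * v j' * (A k j * A k j')) = v j * v j' * (if j = j' then 1 else 0) := by
      intro j'
      rw [← Finset.mul_sum, colsum A hA]
    simp_rw [h1]
    simp [mul_ite, Finset.sum_ite_eq, sq]
  simp_rw [this]
  exact hv

/-- For odeco tensors `T = ∑_k λ_k u_k^{(1)} ⊗ ⋯ ⊗ u_k^{(p)}` and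
`T̃ = ∑_k λ̃_k ũ_k^{(1)} ⊗ ⋯ ⊗ ũ_k^{(p)}` with `p ≥ 3` and `λ₁ ≥ ⋯ ≥ λ_d ≥ 0`:
`λ₁ ≤ max_k { λ̃_k ∏_q |⟨u₁^{(q)}, ũ_k^{(q)}⟩|^{(p-2)/p} } + ‖T̃ - T‖`. -/
theorem stmt14 (p d : ℕ) (hp : 3 ≤ p) (hd : 0 < d)
    (lam tlam : Fin d → ℝ)
    (hlam : ∀ k, 0 ≤ lam k) (htlam : ∀ k, 0 ≤ tlam k)
    (hmono : ∀ k l : Fin d, k ≤ l → lam l ≤ lam k)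
    (u tu : Fin p → Fin d → Fin d → ℝ)
    (hu : ∀ q k l, (∑ j, u q k j * u q l j) = if k = l then 1 else 0)
    (htu : ∀ q k l, (∑ j, tu q k j * tu q l j) = if k = l then 1 else 0)
    (T tT : (Fin p → Fin d) → ℝ)
    (hT : ∀ i, T i = ∑ k, lam k * ∏ q, u q k (i q))
    (htT : ∀ i, tT i = ∑ k, tlam k * ∏ q, tu q k (i q)) :
    lam ⟨0, hd⟩ ≤
      Finset.univ.sup' ⟨⟨0, hd⟩, Finset.mem_univ _⟩
        (fun k => tlam k * ∏ q, |∑ j, u q ⟨0, hd⟩ j * tu q k j| ^ (((p : ℝ) - 2) / (p : ℝ)))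
      + specNorm (fun i => tT i - T i) := by
  have hp0 : 0 < p := by omega
  have hpR : (0 : ℝ) < p := by exact_mod_cast hp0
  set z : Fin d := ⟨0, hd⟩ with hz
  set x : Fin p → Fin d → ℝ := fun q => u q z with hx
  set c : Fin d → Fin p → ℝ := fun k q => ∑ j, u q z j * tu q k j with hc
  set M : ℝ := Finset.univ.sup' ⟨z, Finset.mem_univ _⟩
        (fun k => tlam k * ∏ q, |c k q| ^ (((p : ℝ) - 2) / (p : ℝ))) with hM
  have hxunit : ∀ q, UnitVec (x q) := by
    intro q
    unfold UnitVec
    have := hu q z z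
    simp only [if_pos rfl] at this
    simpa [sq] using this
  -- Step 1 : tInner T x = lam z
  have h1 : tInner T x = lam z := by
    rw [tInner_decomp lam u T hT x]
    have key : ∀ k, (∏ q : Fin p, (∑ j, u q k j * x q j)) = if k = z then 1 else 0 := by
      intro k
      have : ∀ q : Fin p, (∑ j, u q k j * x q j) = if k = z then 1 else 0 := fun q => hu q k z
      simp_rw [this]
      split_ifs with h
      · simp
      · rw [Finset.prod_const, zero_pow (by simpa using hp0.ne')]
    simp_rw [key, mul_ite, mul_one, mul_zero]
    rw [Finset.sum_ite_eq' Finset.univ z lam]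
    simp
  -- Step 2 : tInner tT x = ∑ k, tlam k * ∏ q, c k q
  have h2 : tInner tT x = ∑ k, tlam k * ∏ q, c k q := by
    rw [tInner_decomp tlam tu tT htT x]
    refine Finset.sum_congr rfl fun k _ => ?_
    congr 1
    refine Finset.prod_congr rfl fun q _ => ?_
    simp only [hc]
    exact Finset.sum_congr rfl fun j _ => mul_comm _ _
  -- sum of squares over k equals 1 for each q
  have hsq : ∀ q : Fin p, (∑ k, (c k q) ^ 2) = 1 := by
    intro q
    have hv : ∑ j, (u q z j) ^ 2 = 1 := hxunit q
    exact sum_sq_inner (tu q) (htu q) (u q z) hv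
  have hMnonneg : 0 ≤ M := by
    refine le_trans ?_ (Finset.le_sup' _ (Finset.mem_univ z))
    exact mul_nonneg (htlam z) (Finset.prod_nonneg fun q _ =>
      Real.rpow_nonneg (abs_nonneg _) _)
  -- Step 3 : tInner tT x ≤ M
  have h3 : tInner tT x ≤ M := by
    rw [h2]
    have term_le : ∀ k, tlam k * ∏ q, c k q ≤ M * ((1 / (p : ℝ)) * ∑ q, (c k q) ^ 2) := by
      intro k
      have e1 : tlam k * ∏ q, c k q ≤ tlam k * ∏ q, |c k q| := by
        apply mul_le_mul_of_nonneg_left _ (htlam k)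
        calc (∏ q, c k q) ≤ |∏ q, c k q| := le_abs_self _
        _ = ∏ q, |c k q| := Finset.abs_prod _ _
      have e2 : ∀ q : Fin p, |c k q| =
          |c k q| ^ (((p : ℝ) - 2) / (p : ℝ)) * ((c k q) ^ 2) ^ ((1 : ℝ) / (p : ℝ)) := by
        intro q
        have habs : ((c k q) ^ 2 : ℝ) ^ ((1 : ℝ) / (p : ℝ)) = |c k q| ^ ((2 : ℝ) / (p : ℝ)) := by
          rw [← sq_abs, ← Real.rpow_natCast |c k q| 2, ← Real.rpow_mul (abs_nonneg _)]
          congr 1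
          push_cast
          ring
        have hne : ((p : ℝ) - 2) / (p : ℝ) + 2 / (p : ℝ) ≠ 0 := by
          rw [← add_div]
          have hpe : (p : ℝ) - 2 + 2 = (p : ℝ) := by ring
          rw [hpe, div_self hpR.ne']
          norm_num
        rw [habs, ← Real.rpow_add' (abs_nonneg _) hne]
        rw [← add_div]
        have : (p : ℝ) - 2 + 2 = (p : ℝ) := by ring
        rw [this, div_self hpR.ne', Real.rpow_one]
      have e3 : (∏ q, |c k q|) =
          (∏ q, |c k q| ^ (((p : ℝ) - 2) / (p : ℝ))) * ∏ q, ((c k q) ^ 2) ^ ((1 : ℝ) / (p : ℝ)) := by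
        rw [← Finset.prod_mul_distrib]
        exact Finset.prod_congr rfl fun q _ => e2 q
      have amgm : (∏ q, ((c k q) ^ 2) ^ ((1 : ℝ) / (p : ℝ))) ≤ (1 / (p : ℝ)) * ∑ q, (c k q) ^ 2 := by
        have := Real.geom_mean_le_arith_mean_weighted Finset.univ
          (fun _ : Fin p => 1 / (p : ℝ)) (fun q => (c k q) ^ 2)
          (fun q _ => by positivity)
          (by simp [Finset.sum_const]; field_simp)
          (fun q _ => sq_nonneg _)
        calc (∏ q, ((c k q) ^ 2) ^ ((1 : ℝ) / (p : ℝ)))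
            ≤ ∑ q, (1 / (p : ℝ)) * (c k q) ^ 2 := this
        _ = (1 / (p : ℝ)) * ∑ q, (c k q) ^ 2 := by rw [Finset.mul_sum]
      have hterm_le_M : tlam k * ∏ q, |c k q| ^ (((p : ℝ) - 2) / (p : ℝ)) ≤ M := by
        rw [hM]
        exact Finset.le_sup' (fun k => tlam k * ∏ q, |c k q| ^ (((p : ℝ) - 2) / (p : ℝ)))
          (Finset.mem_univ k)
      calc tlam k * ∏ q, c k q ≤ tlam k * ∏ q, |c k q| := e1
      _ = (tlam k * ∏ q, |c k q| ^ (((p : ℝ) - 2) / (p : ℝ))) *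
            ∏ q, ((c k q) ^ 2) ^ ((1 : ℝ) / (p : ℝ)) := by rw [e3]; ring
      _ ≤ M * ((1 / (p : ℝ)) * ∑ q, (c k q) ^ 2) := by
            apply mul_le_mul hterm_le_M amgm
              (Finset.prod_nonneg fun q _ => Real.rpow_nonneg (sq_nonneg _) _) hMnonneg
    calc (∑ k, tlam k * ∏ q, c k q) ≤ ∑ k, M * ((1 / (p : ℝ)) * ∑ q, (c k q) ^ 2) :=
          Finset.sum_le_sum fun k _ => term_le k
    _ = M * (1 / (p : ℝ)) * ∑ k, ∑ q, (c k q) ^ 2 := by rw [Finset.mul_sum]; ring_nf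
    _ = M * (1 / (p : ℝ)) * ∑ q : Fin p, ∑ k, (c k q) ^ 2 := by rw [Finset.sum_comm]
    _ = M * (1 / (p : ℝ)) * (p : ℝ) := by simp_rw [hsq]; simp
    _ = M := by field_simp
  -- Step 4 : error term
  have h4 : tInner T x - tInner tT x ≤ specNorm (fun i => tT i - T i) := by
    have heq : tInner T x - tInner tT x = -(tInner (fun i => tT i - T i) x) := by
      unfold tInner
      rw [← Finset.sum_sub_distrib, ← Finset.sum_neg_distrib]
      refine Finset.sum_congr rfl fun i _ => by ring
    rw [heq]
    exact neg_tInner_le_specNorm hp0 _ x hxunit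
  calc lam z = tInner tT x + (tInner T x - tInner tT x) := by rw [← h1]; ring
  _ ≤ M + specNorm (fun i => tT i - T i) := add_le_add h3 h4
end

section
/- Let $\tilde{\mathscr{T}}=\sum_{k=1}^d\tilde\lambda_k\tilde u_k^{(1)}\otimes\cdots\otimes\tilde u_k^{(p)}$ be odeco with $\tilde\lambda_k\ge 0$, let $u^{(2)},\ldots,u^{(p)}$ be unit vectors, let $j\in[d]$, and suppose $\tilde\lambda_k\le\Lambda$ for all $k\ne j$. Then for every unit vector $v$ orthogonal to $\tilde u_j^{(1)}$, $|\langle \tilde{\mathscr{T}}\times_2 u^{(2)}\cdots\times_p u^{(p)},\,v\rangle|\le\Lambda\prod_{q=2}^p\sin\angle(u^{(q)},\tilde u_j^{(q)})$. -/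
open Finset Real

/-- A square matrix with orthonormal rows has orthonormal columns. -/
lemma col_orth {d : ℕ} (A : Fin d → Fin d → ℝ)
    (h : ∀ k l, (∑ m, A k m * A l m) = if k = l then 1 else 0) :
    ∀ m n, (∑ k, A k m * A k n) = if m = n then 1 else 0 := by
  intro m n
  have h1 : Matrix.of A * (Matrix.of A).transpose = 1 := by
    ext k l
    simp only [Matrix.mul_apply, Matrix.transpose_apply, Matrix.of_apply, Matrix.one_apply]
    exact h k l
  have h2 : (Matrix.of A).transpose * Matrix.of A = 1 := mul_eq_one_comm.mp h1
  have := congrFun (congrFun h2 m) n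
  simpa [Matrix.mul_apply, Matrix.transpose_apply, Matrix.one_apply] using this

/-- Parseval identity for an orthonormal family of rows. -/
lemma parseval_rows {d : ℕ} (A : Fin d → Fin d → ℝ)
    (h : ∀ k l, (∑ m, A k m * A l m) = if k = l then 1 else 0) (w : Fin d → ℝ) :
    ∑ k, (∑ m, w m * A k m) ^ 2 = ∑ m, w m ^ 2 := by
  have hcol := col_orth A h
  calc ∑ k, (∑ m, w m * A k m) ^ 2
      = ∑ k, ∑ m, ∑ n, (w m * A k m) * (w n * A k n) := by
        refine Finset.sum_congr rfl fun k _ => ?_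
        rw [sq, Finset.sum_mul_sum]
    _ = ∑ m, ∑ n, (w m * w n) * ∑ k, A k m * A k n := by
        rw [Finset.sum_comm]
        refine Finset.sum_congr rfl fun m _ => ?_
        rw [Finset.sum_comm]
        refine Finset.sum_congr rfl fun n _ => ?_
        rw [Finset.mul_sum]
        exact Finset.sum_congr rfl fun k _ => by ring
    _ = ∑ m, w m ^ 2 := by
        refine Finset.sum_congr rfl fun m _ => ?_
        simp only [hcol, mul_ite, mul_one, mul_zero]
        rw [Finset.sum_ite_eq univ m (fun n => w m * w n)]
        simp [sq]

/-- Let `T̃ = ∑_k λ̃_k ũ_k^{(1)} ⊗ ⋯ ⊗ ũ_k^{(p)}` be odeco with `λ̃_k ≥ 0`, let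
`u^{(2)},…,u^{(p)}` be unit vectors, fix `j`, and suppose `λ̃_k ≤ Λ` for all `k ≠ j`. Then for
every unit vector `v ⊥ ũ_j^{(1)}`,
`|⟨T̃ ×₂ u^{(2)} ⋯ ×_p u^{(p)}, v⟩| ≤ Λ ∏_{q=2}^p sin∠(u^{(q)}, ũ_j^{(q)})`. -/
theorem stmt16 (p d : ℕ) (hp : 3 ≤ p)
    (tlam : Fin d → ℝ) (htlam : ∀ k, 0 ≤ tlam k)
    (tu : Fin p → Fin d → Fin d → ℝ)
    (htu : ∀ q k l, (∑ m, tu q k m * tu q l m) = if k = l then 1 else 0)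
    (tT : (Fin p → Fin d) → ℝ)
    (htT : ∀ i, tT i = ∑ k, tlam k * ∏ q, tu q k (i q))
    (u : Fin p → Fin d → ℝ)
    (hu : ∀ q : Fin p, q ≠ ⟨0, by omega⟩ → ∑ m, u q m ^ 2 = 1)
    (j : Fin d) (Λ : ℝ)
    (hΛ : ∀ k, k ≠ j → tlam k ≤ Λ)
    (v : Fin d → ℝ) (hv : ∑ m, v m ^ 2 = 1)
    (hperp : (∑ m, v m * tu ⟨0, by omega⟩ j m) = 0) :
    |∑ m, contractExcept tT u ⟨0, by omega⟩ m * v m| ≤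
      Λ * ∏ q ∈ Finset.univ.erase (⟨0, by omega⟩ : Fin p),
        Real.sqrt (1 - (∑ m, u q m * tu q j m) ^ 2) := by
  set e0 : Fin p := ⟨0, by omega⟩ with he0
  set e1 : Fin p := ⟨1, by omega⟩ with he1
  have he10 : e1 ≠ e0 := by simp [he0, he1, Fin.ext_iff]
  set w : Fin p → Fin d → ℝ := fun q => if q = e0 then v else u q with hwdef
  set c : Fin p → Fin d → ℝ := fun q k => ∑ m, w q m * tu q k m with hcdef
  -- rewrite the inner product
  have key : ∑ m, contractExcept tT u e0 m * v m = ∑ k, tlam k * ∏ q, c q k := by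
    calc ∑ m, contractExcept tT u e0 m * v m
        = ∑ i : Fin p → Fin d,
            tT i * ((∏ q ∈ univ.erase e0, u q (i q)) * v (i e0)) := by
          unfold contractExcept
          simp only [Finset.sum_mul, ite_mul, zero_mul]
          rw [Finset.sum_comm]
          refine Finset.sum_congr rfl fun i _ => ?_
          rw [Finset.sum_ite_eq univ (i e0)
            (fun m => (tT i * ∏ q ∈ univ.erase e0, u q (i q)) * v m)]
          simp [mul_assoc]
      _ = ∑ i : Fin p → Fin d, ∑ k, tlam k * ((∏ q, tu q k (i q)) * ∏ q, w q (i q)) := by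
          refine Finset.sum_congr rfl fun i _ => ?_
          have hwprod : ∏ q, w q (i q) = v (i e0) * ∏ q ∈ univ.erase e0, u q (i q) := by
            rw [← Finset.mul_prod_erase univ (fun q => w q (i q)) (Finset.mem_univ e0)]
            have h1 : w e0 (i e0) = v (i e0) := by simp [hwdef]
            have h2 : ∏ q ∈ univ.erase e0, w q (i q) = ∏ q ∈ univ.erase e0, u q (i q) :=
              Finset.prod_congr rfl fun q hq => by simp [hwdef, (Finset.mem_erase.mp hq).1]
            rw [h1, h2]
          rw [htT, Finset.sum_mul]
          refine Finset.sum_congr rfl fun k _ => ?_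
          rw [hwprod]; ring
      _ = ∑ k, tlam k * ∏ q, c q k := by
          rw [Finset.sum_comm]
          refine Finset.sum_congr rfl fun k _ => ?_
          rw [← Finset.mul_sum]
          congr 1
          calc ∑ i : Fin p → Fin d, (∏ q, tu q k (i q)) * ∏ q, w q (i q)
              = ∑ i : Fin p → Fin d, ∏ q, (w q (i q) * tu q k (i q)) := by
                refine Finset.sum_congr rfl fun i _ => ?_
                rw [← Finset.prod_mul_distrib]
                exact Finset.prod_congr rfl fun q _ => by ring
            _ = ∏ q, ∑ m, w q m * tu q k m := by
                rw [Finset.prod_univ_sum]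
                rw [Fintype.piFinset_univ]
            _ = ∏ q, c q k := rfl
  have hcj : c e0 j = 0 := by
    simpa [hcdef, hwdef] using hperp
  -- Parseval
  have hpar : ∀ q : Fin p, ∑ k, (c q k) ^ 2 = 1 := by
    intro q
    rw [hcdef]
    rw [parseval_rows (tu q) (htu q) (w q)]
    by_cases hq : q = e0
    · subst hq; simpa [hwdef] using hv
    · simpa [hwdef, hq] using hu q hq
  have hF3 : ∀ q : Fin p, ∑ k ∈ univ.erase j, (c q k) ^ 2 = 1 - (c q j) ^ 2 := by
    intro q
    rw [Finset.sum_erase_eq_sub (Finset.mem_univ j), hpar q]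
  have hnn : ∀ q : Fin p, 0 ≤ 1 - (c q j) ^ 2 := by
    intro q
    rw [← hF3 q]
    exact Finset.sum_nonneg fun k _ => sq_nonneg _
  have hF4 : ∀ (q : Fin p) (k : Fin d), k ∈ univ.erase j →
      |c q k| ≤ Real.sqrt (1 - (c q j) ^ 2) := by
    intro q k hk
    rw [← Real.sqrt_sq_eq_abs]
    apply Real.sqrt_le_sqrt
    rw [← hF3 q]
    exact Finset.single_le_sum (f := fun k => (c q k) ^ 2) (fun i _ => sq_nonneg _) hk
  -- Λ is nonnegative
  have hne : (univ.erase j).Nonempty := by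
    by_contra h
    have h0 : ∑ k ∈ univ.erase j, (c e0 k) ^ 2 = 0 := by
      rw [Finset.not_nonempty_iff_eq_empty.mp h]; simp
    rw [hF3 e0, hcj] at h0
    norm_num at h0
  obtain ⟨k0, hk0⟩ := hne
  have hΛ0 : 0 ≤ Λ := le_trans (htlam k0) (hΛ k0 (Finset.mem_erase.mp hk0).1)
  -- the k = j term vanishes
  have hsum_erase : ∑ k, tlam k * ∏ q, c q k = ∑ k ∈ univ.erase j, tlam k * ∏ q, c q k := by
    rw [Finset.sum_erase_eq_sub (Finset.mem_univ j)]
    rw [Finset.prod_eq_zero (Finset.mem_univ e0) hcj]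
    ring
  -- main estimate
  have he1mem : e1 ∈ univ.erase e0 := Finset.mem_erase.mpr ⟨he10, Finset.mem_univ e1⟩
  set S : ℝ := ∏ q ∈ (univ.erase e0).erase e1, Real.sqrt (1 - (c q j) ^ 2) with hSdef
  have hS0 : 0 ≤ S := Finset.prod_nonneg fun q _ => Real.sqrt_nonneg _
  have main : ∑ k ∈ univ.erase j, ∏ q, |c q k| ≤
      ∏ q ∈ univ.erase e0, Real.sqrt (1 - (c q j) ^ 2) := by
    have step1 : ∀ k ∈ univ.erase j, ∏ q, |c q k| ≤ |c e0 k| * (|c e1 k| * S) := by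
      intro k hk
      rw [← Finset.mul_prod_erase univ (fun q => |c q k|) (Finset.mem_univ e0),
        ← Finset.mul_prod_erase (univ.erase e0) (fun q => |c q k|) he1mem]
      refine mul_le_mul_of_nonneg_left (mul_le_mul_of_nonneg_left ?_ (abs_nonneg _))
        (abs_nonneg _)
      exact Finset.prod_le_prod (fun q _ => abs_nonneg _) (fun q _ => hF4 q k hk)
    have cs : ∑ k ∈ univ.erase j, |c e0 k| * |c e1 k| ≤
        Real.sqrt (1 - (c e1 j) ^ 2) := by
      have h1 : (∑ k ∈ univ.erase j, |c e0 k| * |c e1 k|) ^ 2 ≤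
          (∑ k ∈ univ.erase j, (c e0 k) ^ 2) * ∑ k ∈ univ.erase j, (c e1 k) ^ 2 := by
        have := sum_mul_sq_le_sq_mul_sq (univ.erase j) (fun k => |c e0 k|) (fun k => |c e1 k|)
        simpa [sq_abs] using this
      rw [hF3, hF3, hcj] at h1
      have h2 : (∑ k ∈ univ.erase j, |c e0 k| * |c e1 k|) ^ 2 ≤ 1 - (c e1 j) ^ 2 := by
        nlinarith [hnn e1]
      have h3 : 0 ≤ ∑ k ∈ univ.erase j, |c e0 k| * |c e1 k| :=
        Finset.sum_nonneg fun k _ => mul_nonneg (abs_nonneg _) (abs_nonneg _)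
      exact (Real.le_sqrt h3 (hnn e1)).mpr h2
    calc ∑ k ∈ univ.erase j, ∏ q, |c q k|
        ≤ ∑ k ∈ univ.erase j, |c e0 k| * (|c e1 k| * S) := Finset.sum_le_sum step1
      _ = S * ∑ k ∈ univ.erase j, |c e0 k| * |c e1 k| := by
          rw [Finset.mul_sum]
          exact Finset.sum_congr rfl fun k _ => by ring
      _ ≤ S * Real.sqrt (1 - (c e1 j) ^ 2) := mul_le_mul_of_nonneg_left cs hS0
      _ = ∏ q ∈ univ.erase e0, Real.sqrt (1 - (c q j) ^ 2) := by
          rw [← Finset.mul_prod_erase (univ.erase e0)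
            (fun q => Real.sqrt (1 - (c q j) ^ 2)) he1mem, ← hSdef]
          ring
  -- put everything together
  have hprod_eq : ∏ q ∈ univ.erase e0, Real.sqrt (1 - (c q j) ^ 2) =
      ∏ q ∈ univ.erase e0, Real.sqrt (1 - (∑ m, u q m * tu q j m) ^ 2) := by
    refine Finset.prod_congr rfl fun q hq => ?_
    have hq0 : q ≠ e0 := (Finset.mem_erase.mp hq).1
    simp [hcdef, hwdef, hq0]
  calc |∑ m, contractExcept tT u e0 m * v m|
      = |∑ k ∈ univ.erase j, tlam k * ∏ q, c q k| := by rw [key, hsum_erase]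
    _ ≤ ∑ k ∈ univ.erase j, |tlam k * ∏ q, c q k| := Finset.abs_sum_le_sum_abs _ _
    _ = ∑ k ∈ univ.erase j, tlam k * ∏ q, |c q k| := by
        refine Finset.sum_congr rfl fun k _ => ?_
        rw [abs_mul, abs_of_nonneg (htlam k), Finset.abs_prod]
    _ ≤ ∑ k ∈ univ.erase j, Λ * ∏ q, |c q k| := by
        refine Finset.sum_le_sum fun k hk => ?_
        exact mul_le_mul_of_nonneg_right (hΛ k (Finset.mem_erase.mp hk).1)
          (Finset.prod_nonneg fun q _ => abs_nonneg _)
    _ = Λ * ∑ k ∈ univ.erase j, ∏ q, |c q k| := (Finset.mul_sum _ _ _).symm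
    _ ≤ Λ * ∏ q ∈ univ.erase e0, Real.sqrt (1 - (c q j) ^ 2) :=
        mul_le_mul_of_nonneg_left main hΛ0
    _ = Λ * ∏ q ∈ univ.erase e0, Real.sqrt (1 - (∑ m, u q m * tu q j m) ^ 2) := by
        rw [hprod_eq]
end
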